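/- arXiv:2310.20358 — 15 statements merged into one kernel-verified Lean document; each statement's English description precedes it below -/
import Mathlib

section
/- Let n ≥ 1, let c ∈ ℂⁿ, and let g : ℂⁿ → ℂ be a polynomial function such that the function z ↦ g(z + c) − g(z) is constant on ℂⁿ. Then there exist a₁, …, aₙ ∈ ℂ, a constant B ∈ ℂ, and a polynomial function Φ : ℂⁿ → ℂ that is c-periodic, such that g(z) = a₁z₁ + ⋯ + aₙzₙ + Φ(z) + B for all z ∈ ℂⁿ. (This is the structural decomposition, used repeatedly in the proofs of Theorems 1–3, of a polynomial whose difference along c is constant into a linear part, a c-periodic polynomial part Φ as in equation (2.5), and a constant.) -/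
open Complex

/-- Structural decomposition: a polynomial function on ℂⁿ whose difference along `c`
is constant splits into a linear part, a `c`-periodic polynomial part, and a constant. -/
theorem stmt_0 (n : ℕ) (hn : 1 ≤ n) (c : Fin n → ℂ) (g : (Fin n → ℂ) → ℂ)
    (hg : ∃ p : MvPolynomial (Fin n) ℂ, ∀ z, g z = MvPolynomial.eval z p)
    (hconst : ∃ w : ℂ, ∀ z, g (z + c) - g z = w) :
    ∃ (a : Fin n → ℂ) (B : ℂ) (Φ : (Fin n → ℂ) → ℂ),
      (∃ q : MvPolynomial (Fin n) ℂ, ∀ z, Φ z = MvPolynomial.eval z q) ∧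
      (∀ z, Φ (z + c) = Φ z) ∧
      (∀ z, g z = (∑ j, a j * z j) + Φ z + B) := by
  obtain ⟨p, hp⟩ := hg
  obtain ⟨w, hw⟩ := hconst
  by_cases hc : ∃ j, c j ≠ 0
  · obtain ⟨j, hj⟩ := hc
    refine ⟨fun i => if i = j then w / c j else 0, 0,
      fun z => g z - (w / c j) * z j, ?_, ?_, ?_⟩
    · exact ⟨p - MvPolynomial.C (w / c j) * MvPolynomial.X j,
        fun z => by simp [hp z]⟩
    · intro z
      have h := hw z
      have hcancel : w / c j * c j = w := div_mul_cancel₀ w hj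
      simp only [Pi.add_apply]
      have : g (z + c) = g z + w := by linear_combination h
      rw [this]
      ring_nf
      linear_combination -hcancel
    · intro z
      have : (∑ i, (if i = j then w / c j else 0) * z i) = w / c j * z j := by
        rw [Finset.sum_eq_single j]
        · simp
        · intro b _ hb; simp [hb]
        · simp
      rw [this]; ring
  · push_neg at hc
    have hc0 : c = 0 := funext fun i => hc i
    refine ⟨fun _ => 0, 0, g, ⟨p, hp⟩, ?_, ?_⟩
    · intro z; rw [hc0]; simp
    · intro z; simp
end

section
/- Let n ≥ 1, let A, B : ℂⁿ → ℂ be polynomial functions, and let w ∈ ℂ with w ≠ 0. If exp(A(z)) + exp(B(z)) = w for all z ∈ ℂⁿ, then both A and B are constant. (This is the claim established via the second fundamental theorem in Case 3 of the proof of Theorem 2 and in equation (2.37) of the proof of Theorem 3, specialized to polynomial exponents.) -/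
open Complex

/-- Evaluating a multivariate polynomial along the line `t ↦ t • z` is a polynomial in `t`. -/
lemma eval_line {n : ℕ} (p : MvPolynomial (Fin n) ℂ) (z : Fin n → ℂ) (t : ℂ) :
    Polynomial.eval t ((MvPolynomial.aeval fun i => Polynomial.C (z i) * Polynomial.X) p) =
    (MvPolynomial.eval fun i => z i * t) p := by
  induction p using MvPolynomial.induction_on with
  | C a => simp
  | add p q hp hq => simp [hp, hq]
  | mul_X p i hp => simp [hp]

/-- A complex polynomial in one variable that omits a value is constant. -/
lemma poly_const_of_omits (r : Polynomial ℂ) (c : ℂ) (h : ∀ t, r.eval t ≠ c) :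
    ∀ t, r.eval t = r.eval 0 := by
  intro t
  have hdeg : ¬ 0 < (r - Polynomial.C c).degree := by
    intro hd
    obtain ⟨x, hx⟩ := Complex.exists_root hd
    have hx' : r.eval x = c := by
      have : r.eval x - c = 0 := by simpa [Polynomial.IsRoot] using hx
      exact sub_eq_zero.mp this
    exact h x hx'
  have hle : (r - Polynomial.C c).degree ≤ 0 := not_lt.mp hdeg
  have hC := Polynomial.eq_C_of_degree_le_zero hle
  have h0 : r = Polynomial.C ((r - Polynomial.C c).coeff 0 + c) := by
    rw [map_add, ← hC]; ring
  rw [h0]; simp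

/-- If the sum of the exponentials of two polynomial functions on ℂⁿ is identically a
nonzero constant, then both polynomial functions are constant. -/
theorem stmt_2 (n : ℕ) (hn : 1 ≤ n) (A B : (Fin n → ℂ) → ℂ)
    (hA : ∃ p : MvPolynomial (Fin n) ℂ, ∀ z, A z = MvPolynomial.eval z p)
    (hB : ∃ q : MvPolynomial (Fin n) ℂ, ∀ z, B z = MvPolynomial.eval z q)
    (w : ℂ) (hw : w ≠ 0)
    (heq : ∀ z, Complex.exp (A z) + Complex.exp (B z) = w) :
    (∃ u : ℂ, ∀ z, A z = u) ∧ (∃ v : ℂ, ∀ z, B z = v) := by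
  have hAne : ∀ z, A z ≠ Complex.log w := by
    intro z hz
    have h := heq z
    rw [hz, Complex.exp_log hw] at h
    exact Complex.exp_ne_zero (B z) (by linear_combination h)
  have hBne : ∀ z, B z ≠ Complex.log w := by
    intro z hz
    have h := heq z
    rw [hz, Complex.exp_log hw] at h
    exact Complex.exp_ne_zero (A z) (by linear_combination h)
  have key : ∀ (C : (Fin n → ℂ) → ℂ),
      (∃ p : MvPolynomial (Fin n) ℂ, ∀ z, C z = MvPolynomial.eval z p) →
      (∀ z, C z ≠ Complex.log w) → ∃ u : ℂ, ∀ z, C z = u := by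
    rintro C ⟨p, hp⟩ hne
    refine ⟨C 0, fun z => ?_⟩
    set r : Polynomial ℂ :=
      MvPolynomial.aeval (fun i => Polynomial.C (z i) * Polynomial.X) p with hr
    have hrev : ∀ t : ℂ, r.eval t = C (fun i => z i * t) := by
      intro t
      rw [hp, hr, eval_line]
    have hconst := poly_const_of_omits r (Complex.log w) (fun t => by
      rw [hrev]; exact hne _)
    have h1 := hconst 1
    rw [hrev, hrev] at h1
    simp at h1; exact h1
  exact ⟨key A hA hAne, key B hB hBne⟩
end

section
/- Let c = (c₁, c₂) ∈ ℂ² and let p : ℂ² → ℂ be a polynomial function such that z ↦ p(z + c) − p(z) is constant on ℂ² and such that ∂p/∂z₁ is constant on ℂ². Then there exist a₁, a₂, β ∈ ℂ and a one-variable polynomial function H : ℂ → ℂ satisfying H(z₂ + c₂) = H(z₂) for all z₂ ∈ ℂ, such that p(z₁, z₂) = a₁z₁ + a₂z₂ + H(z₂) + β for all (z₁, z₂) ∈ ℂ². (This is the structural claim, used in Cases 1 and 2 of the proof of Theorem 2 and in the proof of Theorem 3, giving the shape L(z) + H(s) + β of the polynomial exponents.) -/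
open Complex

private lemma aux_eval (q : MvPolynomial (Fin 2) ℂ) (f : Fin 2 → Polynomial ℂ) (t : ℂ) :
    Polynomial.eval t (MvPolynomial.aeval f q) =
      MvPolynomial.eval (fun i => Polynomial.eval t (f i)) q := by
  have h := congrFun (congrArg DFunLike.coe
    (MvPolynomial.comp_aeval (φ := Polynomial.aeval t (R := ℂ)) (f := f))) q
  simp only [AlgHom.comp_apply] at h
  simpa [Polynomial.coe_aeval_eq_eval, MvPolynomial.coe_aeval_eq_eval] using h

private lemma periodic_poly_const (P : Polynomial ℂ) (c₂ : ℂ) (hc : c₂ ≠ 0)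
    (hper : ∀ s : ℂ, P.eval (s + c₂) = P.eval s) : ∀ s : ℂ, P.eval s = P.eval 0 := by
  have hn : ∀ n : ℕ, P.eval ((n : ℂ) * c₂) = P.eval 0 := by
    intro n
    induction n with
    | zero => simp
    | succ n ih =>
      have : ((n + 1 : ℕ) : ℂ) * c₂ = (n : ℂ) * c₂ + c₂ := by push_cast; ring
      rw [this, hper, ih]
  set R := P - Polynomial.C (P.eval 0) with hR
  have hRz : R = 0 := by
    apply Polynomial.eq_zero_of_infinite_isRoot
    apply Set.infinite_of_injective_forall_mem (f := fun n : ℕ => (n : ℂ) * c₂)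
    · intro n m h
      exact_mod_cast mul_right_cancel₀ hc h
    · intro n
      simp only [Set.mem_setOf_eq, Polynomial.IsRoot, hR, Polynomial.eval_sub,
        Polynomial.eval_C, hn n, sub_self]
  intro s
  have := congrArg (Polynomial.eval s) hRz
  simp only [hR, Polynomial.eval_sub, Polynomial.eval_C, Polynomial.eval_zero] at this
  linear_combination this

/-- Structural shape of a polynomial p on ℂ² whose difference along c is constant and
whose ∂p/∂z₁ is constant: p(z₁, z₂) = a₁z₁ + a₂z₂ + H(z₂) + β with H a c₂-periodic
one-variable polynomial function. -/
theorem stmt_6 (c : ℂ × ℂ) (p : ℂ × ℂ → ℂ)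
    (hp : ∃ q : MvPolynomial (Fin 2) ℂ, ∀ z : ℂ × ℂ, p z = MvPolynomial.eval ![z.1, z.2] q)
    (hdiff : ∃ w : ℂ, ∀ z : ℂ × ℂ, p (z + c) - p z = w)
    (hderiv : ∃ d : ℂ, ∀ z : ℂ × ℂ, deriv (fun t => p (t, z.2)) z.1 = d) :
    ∃ (a₁ a₂ β : ℂ) (H : ℂ → ℂ),
      (∃ h : Polynomial ℂ, ∀ t, H t = Polynomial.eval t h) ∧
      (∀ t : ℂ, H (t + c.2) = H t) ∧
      (∀ z : ℂ × ℂ, p z = a₁ * z.1 + a₂ * z.2 + H z.2 + β) := by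
  obtain ⟨q, hq⟩ := hp
  obtain ⟨w, hw⟩ := hdiff
  obtain ⟨d, hd⟩ := hderiv
  set G : ℂ → ℂ := fun s => p (0, s) with hGdef
  set GP : Polynomial ℂ := MvPolynomial.aeval ![Polynomial.C 0, Polynomial.X] q with hGPdef
  have hGP : ∀ s, G s = GP.eval s := by
    intro s
    show p (0, s) = _
    rw [hq (0, s), hGPdef, aux_eval]
    have hfe : (![((0:ℂ), s).1, ((0:ℂ), s).2] : Fin 2 → ℂ)
        = fun i => Polynomial.eval s (![Polynomial.C 0, Polynomial.X] i) := by
      funext i; fin_cases i <;> simp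
    rw [hfe]
  -- Step 1: p z = d * z.1 + G z.2
  have key1 : ∀ z : ℂ × ℂ, p z = d * z.1 + G z.2 := by
    intro z
    set z₂ := z.2 with hz₂
    set P₂ : Polynomial ℂ := MvPolynomial.aeval ![Polynomial.X, Polynomial.C z₂] q with hP₂def
    have hP₂ : ∀ t, p (t, z₂) = P₂.eval t := by
      intro t
      rw [hq (t, z₂), hP₂def, aux_eval]
      have hfe : (![(t, z₂).1, (t, z₂).2] : Fin 2 → ℂ)
          = fun i => Polynomial.eval t (![Polynomial.X, Polynomial.C z₂] i) := by
        funext i; fin_cases i <;> simp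
      rw [hfe]
    have hder : ∀ t : ℂ, P₂.derivative.eval t = d := by
      intro t
      have h1 := hd (t, z₂)
      simp only at h1
      rw [show (fun t' => p (t', z₂)) = fun t' => P₂.eval t' from funext hP₂] at h1
      rwa [Polynomial.deriv] at h1
    have hderC : P₂.derivative = Polynomial.C d := by
      apply Polynomial.funext
      intro x
      simp [hder x]
    set Q : Polynomial ℂ := P₂ - Polynomial.C d * Polynomial.X with hQdef
    have hQder : Q.derivative = 0 := by
      simp [hQdef, hderC]
    have hQdeg : Q.natDegree = 0 := Polynomial.natDegree_eq_zero_of_derivative_eq_zero hQder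
    have hQC : Q = Polynomial.C (Q.coeff 0) := Polynomial.eq_C_of_natDegree_eq_zero hQdeg
    have heval : ∀ t : ℂ, P₂.eval t = d * t + Q.coeff 0 := by
      intro t
      have := congrArg (Polynomial.eval t) hQC
      simp only [hQdef, Polynomial.eval_sub, Polynomial.eval_mul, Polynomial.eval_C,
        Polynomial.eval_X] at this
      linear_combination this
    have h0 : G z₂ = Q.coeff 0 := by
      rw [hGdef]
      simp only
      rw [hP₂ 0, heval 0]
      ring
    calc p z = p (z.1, z₂) := by rw [hz₂]
      _ = P₂.eval z.1 := hP₂ z.1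
      _ = d * z.1 + Q.coeff 0 := heval z.1
      _ = d * z.1 + G z₂ := by rw [h0]
  -- Step 2: difference of G
  have key2 : ∀ s : ℂ, G (s + c.2) - G s = w - d * c.1 := by
    intro s
    have h1 := hw (0, s)
    have h2 : ((0 : ℂ), s) + c = (c.1, s + c.2) := by
      simp [Prod.ext_iff]
    rw [h2, key1 (c.1, s + c.2), key1 (0, s)] at h1
    simp only at h1
    linear_combination h1
  by_cases hc : c.2 = 0
  · refine ⟨d, 0, 0, G, ⟨GP, hGP⟩, ?_, ?_⟩
    · intro t; rw [hc, add_zero]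
    · intro z; rw [key1 z]; ring
  · set k := w - d * c.1 with hk
    set HP : Polynomial ℂ := GP - Polynomial.C (k / c.2) * Polynomial.X with hHPdef
    have hHP : ∀ s : ℂ, HP.eval s = G s - (k / c.2) * s := by
      intro s
      simp [hHPdef, hGP s]
    have hper : ∀ s : ℂ, HP.eval (s + c.2) = HP.eval s := by
      intro s
      rw [hHP, hHP]
      have := key2 s
      field_simp
      linear_combination c.2 * this
    have hconst := periodic_poly_const HP c.2 hc hper
    have hGform : ∀ s : ℂ, G s = (k / c.2) * s + G 0 := by
      intro s
      have h1 := hconst s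
      rw [hHP s, hHP 0] at h1
      linear_combination h1
    refine ⟨d, k / c.2, G 0, fun _ => 0, ⟨0, by simp⟩, fun t => rfl, ?_⟩
    intro z
    rw [key1 z, hGform z.2]
    ring
end

section
/- (Verification direction of Theorem 1, conclusion (i).) Let n ≥ 1, c ∈ ℂⁿ, let ξ₁, ξ₂ ∈ ℂ with ξⱼ ≠ 0 and ξⱼ⁴ ≠ 1 for j = 1, 2, let a₁, …, aₙ ∈ ℂ and set L(z) = a₁z₁ + ⋯ + aₙzₙ, let Φ : ℂⁿ → ℂ be a c-periodic polynomial function, and let B₁, B₂ ∈ ℂ satisfy exp(L(c)) = −(ξ₁² − 1)(ξ₂² − 1)/((ξ₁² + 1)(ξ₂² + 1)) and exp(B₁ − B₂) = ξ₁²(ξ₂⁴ − 1)/(ξ₂²(ξ₁⁴ − 1)). Define f₁(z) = ((ξ₁² + 1)/(2ξ₁))·exp((L(z) + Φ(z) + B₁)/2) and f₂(z) = ((ξ₂² + 1)/(2ξ₂))·exp((L(z) + Φ(z) + B₂)/2). Then for all z ∈ ℂⁿ: f₁(z)² + f₂(z + c)² = exp(L(z) + Φ(z) + B₁) and f₂(z)²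 + f₁(z + c)² = exp(L(z) + Φ(z) + B₂). -/
open Complex


/-- The two scalar identities underlying the verification. -/
lemma stmt_7_aux (ξ₁ ξ₂ : ℂ) (hξ₁0 : ξ₁ ≠ 0) (hξ₂0 : ξ₂ ≠ 0)
    (h14 : ξ₁ ^ 4 - 1 ≠ 0) (h1p : ξ₁ ^ 2 + 1 ≠ 0) (h2p : ξ₂ ^ 2 + 1 ≠ 0) :
    (((ξ₁ ^ 2 + 1) / (2 * ξ₁)) ^ 2 * (ξ₁ ^ 2 * (ξ₂ ^ 4 - 1) / (ξ₂ ^ 2 * (ξ₁ ^ 4 - 1)))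
        + ((ξ₂ ^ 2 + 1) / (2 * ξ₂)) ^ 2 *
          (-((ξ₁ ^ 2 - 1) * (ξ₂ ^ 2 - 1)) / ((ξ₁ ^ 2 + 1) * (ξ₂ ^ 2 + 1)))
        = ξ₁ ^ 2 * (ξ₂ ^ 4 - 1) / (ξ₂ ^ 2 * (ξ₁ ^ 4 - 1))) ∧
    (((ξ₂ ^ 2 + 1) / (2 * ξ₂)) ^ 2
        + ((ξ₁ ^ 2 + 1) / (2 * ξ₁)) ^ 2 * (ξ₁ ^ 2 * (ξ₂ ^ 4 - 1) / (ξ₂ ^ 2 * (ξ₁ ^ 4 - 1))) *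
          (-((ξ₁ ^ 2 - 1) * (ξ₂ ^ 2 - 1)) / ((ξ₁ ^ 2 + 1) * (ξ₂ ^ 2 + 1)))
        = 1) := by
  have h2 : (2 : ℂ) ≠ 0 := two_ne_zero
  have hD1 : (2 * ξ₁) ^ 2 * (ξ₂ ^ 2 * (ξ₁ ^ 4 - 1)) ≠ 0 :=
    mul_ne_zero (pow_ne_zero _ (mul_ne_zero h2 hξ₁0)) (mul_ne_zero (pow_ne_zero _ hξ₂0) h14)
  have hD2 : (2 * ξ₂) ^ 2 * ((ξ₁ ^ 2 + 1) * (ξ₂ ^ 2 + 1)) ≠ 0 :=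
    mul_ne_zero (pow_ne_zero _ (mul_ne_zero h2 hξ₂0)) (mul_ne_zero h1p h2p)
  have hr : ξ₂ ^ 2 * (ξ₁ ^ 4 - 1) ≠ 0 := mul_ne_zero (pow_ne_zero _ hξ₂0) h14
  constructor
  · rw [div_pow, div_pow, div_mul_div_comm, div_mul_div_comm,
      div_add_div _ _ hD1 hD2, div_eq_div_iff (mul_ne_zero hD1 hD2) hr]
    ring
  · have t2 : ((ξ₁ ^ 2 + 1) / (2 * ξ₁)) ^ 2 * (ξ₁ ^ 2 * (ξ₂ ^ 4 - 1) / (ξ₂ ^ 2 * (ξ₁ ^ 4 - 1))) *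
        (-((ξ₁ ^ 2 - 1) * (ξ₂ ^ 2 - 1)) / ((ξ₁ ^ 2 + 1) * (ξ₂ ^ 2 + 1)))
        = -(ξ₂ ^ 2 - 1) ^ 2 / (2 * ξ₂) ^ 2 := by
      rw [div_pow, div_mul_div_comm, div_mul_div_comm,
        div_eq_div_iff (mul_ne_zero hD1 (mul_ne_zero h1p h2p))
          (pow_ne_zero _ (mul_ne_zero h2 hξ₂0))]
      ring
    rw [t2, div_pow, div_add_div _ _ (pow_ne_zero _ (mul_ne_zero h2 hξ₂0))
      (pow_ne_zero _ (mul_ne_zero h2 hξ₂0)),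
      div_eq_one_iff_eq (mul_ne_zero (pow_ne_zero _ (mul_ne_zero h2 hξ₂0))
        (pow_ne_zero _ (mul_ne_zero h2 hξ₂0)))]
    ring

/-- Verification direction of Theorem 1, conclusion (i). -/
theorem stmt_7 (n : ℕ) (hn : 1 ≤ n) (c : Fin n → ℂ) (ξ₁ ξ₂ : ℂ)
    (hξ₁0 : ξ₁ ≠ 0) (hξ₂0 : ξ₂ ≠ 0) (hξ₁4 : ξ₁ ^ 4 ≠ 1) (hξ₂4 : ξ₂ ^ 4 ≠ 1)
    (a : Fin n → ℂ) (L : (Fin n → ℂ) → ℂ) (hL : ∀ z, L z = ∑ j, a j * z j)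
    (Φ : (Fin n → ℂ) → ℂ)
    (hΦpoly : ∃ p : MvPolynomial (Fin n) ℂ, ∀ z, Φ z = MvPolynomial.eval z p)
    (hΦper : ∀ z, Φ (z + c) = Φ z)
    (B₁ B₂ : ℂ)
    (hLc : Complex.exp (L c) =
      -((ξ₁ ^ 2 - 1) * (ξ₂ ^ 2 - 1)) / ((ξ₁ ^ 2 + 1) * (ξ₂ ^ 2 + 1)))
    (hB : Complex.exp (B₁ - B₂) = ξ₁ ^ 2 * (ξ₂ ^ 4 - 1) / (ξ₂ ^ 2 * (ξ₁ ^ 4 - 1)))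
    (f₁ f₂ : (Fin n → ℂ) → ℂ)
    (hf₁ : ∀ z, f₁ z = ((ξ₁ ^ 2 + 1) / (2 * ξ₁)) * Complex.exp ((L z + Φ z + B₁) / 2))
    (hf₂ : ∀ z, f₂ z = ((ξ₂ ^ 2 + 1) / (2 * ξ₂)) * Complex.exp ((L z + Φ z + B₂) / 2)) :
    ∀ z, f₁ z ^ 2 + f₂ (z + c) ^ 2 = Complex.exp (L z + Φ z + B₁) ∧
         f₂ z ^ 2 + f₁ (z + c) ^ 2 = Complex.exp (L z + Φ z + B₂) := by
  have h14 : ξ₁ ^ 4 - 1 ≠ 0 := sub_ne_zero.mpr hξ₁4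
  have h24 : ξ₂ ^ 4 - 1 ≠ 0 := sub_ne_zero.mpr hξ₂4
  have h1p : ξ₁ ^ 2 + 1 ≠ 0 := fun h => h14 (by
    rw [show ξ₁ ^ 4 - 1 = (ξ₁ ^ 2 - 1) * (ξ₁ ^ 2 + 1) by ring, h, mul_zero])
  have h1m : ξ₁ ^ 2 - 1 ≠ 0 := fun h => h14 (by
    rw [show ξ₁ ^ 4 - 1 = (ξ₁ ^ 2 - 1) * (ξ₁ ^ 2 + 1) by ring, h, zero_mul])
  have h2p : ξ₂ ^ 2 + 1 ≠ 0 := fun h => h24 (by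
    rw [show ξ₂ ^ 4 - 1 = (ξ₂ ^ 2 - 1) * (ξ₂ ^ 2 + 1) by ring, h, mul_zero])
  have h2m : ξ₂ ^ 2 - 1 ≠ 0 := fun h => h24 (by
    rw [show ξ₂ ^ 4 - 1 = (ξ₂ ^ 2 - 1) * (ξ₂ ^ 2 + 1) by ring, h, zero_mul])
  intro z
  have hLz : L (z + c) = L z + L c := by
    simp [hL, mul_add, Finset.sum_add_distrib]
  have hΦz := hΦper z
  have hsq : ∀ w : ℂ, Complex.exp (w / 2) ^ 2 = Complex.exp w := fun w => by
    rw [sq, ← Complex.exp_add, add_halves]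
  have hE : Complex.exp (L z + Φ z + B₂) ≠ 0 := Complex.exp_ne_zero _
  have h12 : Complex.exp (L z + Φ z + B₁) =
      Complex.exp (L z + Φ z + B₂) * Complex.exp (B₁ - B₂) := by
    rw [← Complex.exp_add]; ring_nf
  have hsplit1 : Complex.exp (L z + L c + Φ z + B₂) =
      Complex.exp (L z + Φ z + B₂) * Complex.exp (L c) := by
    rw [← Complex.exp_add]; ring_nf
  have hsplit2 : Complex.exp (L z + L c + Φ z + B₁) =
      Complex.exp (L z + Φ z + B₂) * Complex.exp (B₁ - B₂) * Complex.exp (L c) := by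
    rw [← Complex.exp_add, ← Complex.exp_add]; ring_nf
  constructor
  · have key1 : ((ξ₁ ^ 2 + 1) / (2 * ξ₁)) ^ 2 * (ξ₁ ^ 2 * (ξ₂ ^ 4 - 1) / (ξ₂ ^ 2 * (ξ₁ ^ 4 - 1)))
        + ((ξ₂ ^ 2 + 1) / (2 * ξ₂)) ^ 2 *
          (-((ξ₁ ^ 2 - 1) * (ξ₂ ^ 2 - 1)) / ((ξ₁ ^ 2 + 1) * (ξ₂ ^ 2 + 1)))
        = ξ₁ ^ 2 * (ξ₂ ^ 4 - 1) / (ξ₂ ^ 2 * (ξ₁ ^ 4 - 1)) :=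
      (stmt_7_aux ξ₁ ξ₂ hξ₁0 hξ₂0 h14 h1p h2p).1
    rw [hf₁ z, hf₂ (z + c), hLz, hΦz, mul_pow, mul_pow, hsq, hsq, hsplit1, h12, hLc, hB]
    linear_combination Complex.exp (L z + Φ z + B₂) * key1
  · have key2 : ((ξ₂ ^ 2 + 1) / (2 * ξ₂)) ^ 2
        + ((ξ₁ ^ 2 + 1) / (2 * ξ₁)) ^ 2 * (ξ₁ ^ 2 * (ξ₂ ^ 4 - 1) / (ξ₂ ^ 2 * (ξ₁ ^ 4 - 1))) *
          (-((ξ₁ ^ 2 - 1) * (ξ₂ ^ 2 - 1)) / ((ξ₁ ^ 2 + 1) * (ξ₂ ^ 2 + 1)))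
        = 1 :=
      (stmt_7_aux ξ₁ ξ₂ hξ₁0 hξ₂0 h14 h1p h2p).2
    rw [hf₂ z, hf₁ (z + c), hLz, hΦz, mul_pow, mul_pow, hsq, hsq, hsplit2, hLc, hB]
    linear_combination Complex.exp (L z + Φ z + B₂) * key2
end

section
/- (Verification direction of Theorem 1, conclusion (ii).) Let n ≥ 1, c ∈ ℂⁿ, let L₁(z) = Σⱼ a₁ⱼ zⱼ and L₂(z) = Σⱼ a₂ⱼ zⱼ with a₁ⱼ, a₂ⱼ ∈ ℂ, let Φ, Ψ : ℂⁿ → ℂ be c-periodic polynomial functions, and let B₁, B₂, B₃, B₄ ∈ ℂ satisfy one of the following four sets of relations: (a) e^{L₁(c)} = i, e^{L₂(c)} = i, e^{B₁−B₂} = −1, e^{B₃−B₄} = 1; (b) e^{L₁(c)} = i, e^{L₂(c)} = −i, e^{B₁−B₂} = −1, e^{B₃−B₄} = −1; (c) e^{L₁(c)} = −i, e^{L₂(c)} = i, e^{B₁−B₂} = 1, e^{B₃−B₄} = 1; (d) e^{L₁(c)} = −i, e^{L₂(c)} = −i, e^{B₁−B₂} = 1, e^{B₃−B₄} = −1. Define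 f₁(z) = (1/2)(e^{L₁(z)+Φ(z)+B₁} + e^{L₂(z)+Ψ(z)+B₃}) and f₂(z) = (1/2)(e^{L₁(z)+Φ(z)+B₂} + e^{L₂(z)+Ψ(z)+B₄}). Then for all z ∈ ℂⁿ: f₁(z)² + f₂(z + c)² = e^{L₁(z)+L₂(z)+Φ(z)+Ψ(z)+B₁+B₃} and f₂(z)² + f₁(z + c)² = e^{L₁(z)+L₂(z)+Φ(z)+Ψ(z)+B₂+B₄}. -/
open Complex

/-- Verification direction of Theorem 1, conclusion (ii). -/
theorem stmt_8 (n : ℕ) (hn : 1 ≤ n) (c : Fin n → ℂ)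
    (a₁ a₂ : Fin n → ℂ) (L₁ L₂ : (Fin n → ℂ) → ℂ)
    (hL₁ : ∀ z, L₁ z = ∑ j, a₁ j * z j) (hL₂ : ∀ z, L₂ z = ∑ j, a₂ j * z j)
    (Φ Ψ : (Fin n → ℂ) → ℂ)
    (hΦpoly : ∃ p : MvPolynomial (Fin n) ℂ, ∀ z, Φ z = MvPolynomial.eval z p)
    (hΨpoly : ∃ p : MvPolynomial (Fin n) ℂ, ∀ z, Ψ z = MvPolynomial.eval z p)
    (hΦper : ∀ z, Φ (z + c) = Φ z) (hΨper : ∀ z, Ψ (z + c) = Ψ z)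
    (B₁ B₂ B₃ B₄ : ℂ)
    (hcases :
      (Complex.exp (L₁ c) = I ∧ Complex.exp (L₂ c) = I ∧
        Complex.exp (B₁ - B₂) = -1 ∧ Complex.exp (B₃ - B₄) = 1) ∨
      (Complex.exp (L₁ c) = I ∧ Complex.exp (L₂ c) = -I ∧
        Complex.exp (B₁ - B₂) = -1 ∧ Complex.exp (B₃ - B₄) = -1) ∨
      (Complex.exp (L₁ c) = -I ∧ Complex.exp (L₂ c) = I ∧
        Complex.exp (B₁ - B₂) = 1 ∧ Complex.exp (B₃ - B₄) = 1) ∨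
      (Complex.exp (L₁ c) = -I ∧ Complex.exp (L₂ c) = -I ∧
        Complex.exp (B₁ - B₂) = 1 ∧ Complex.exp (B₃ - B₄) = -1))
    (f₁ f₂ : (Fin n → ℂ) → ℂ)
    (hf₁ : ∀ z, f₁ z = (1 / 2) *
      (Complex.exp (L₁ z + Φ z + B₁) + Complex.exp (L₂ z + Ψ z + B₃)))
    (hf₂ : ∀ z, f₂ z = (1 / 2) *
      (Complex.exp (L₁ z + Φ z + B₂) + Complex.exp (L₂ z + Ψ z + B₄))) :
    ∀ z, f₁ z ^ 2 + f₂ (z + c) ^ 2 =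
            Complex.exp (L₁ z + L₂ z + Φ z + Ψ z + B₁ + B₃) ∧
         f₂ z ^ 2 + f₁ (z + c) ^ 2 =
            Complex.exp (L₁ z + L₂ z + Φ z + Ψ z + B₂ + B₄) := by
  have hLadd₁ : ∀ z, L₁ (z + c) = L₁ z + L₁ c := by
    intro z
    simp only [hL₁, Pi.add_apply, mul_add, ← Finset.sum_add_distrib]
  have hLadd₂ : ∀ z, L₂ (z + c) = L₂ z + L₂ c := by
    intro z
    simp only [hL₂, Pi.add_apply, mul_add, ← Finset.sum_add_distrib]
  have key : Complex.exp (L₁ c) ^ 2 = -1 ∧ Complex.exp (L₂ c) ^ 2 = -1 ∧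
      Complex.exp (B₁ - B₂) ^ 2 = 1 ∧ Complex.exp (B₃ - B₄) ^ 2 = 1 ∧
      Complex.exp (L₁ c) * Complex.exp (L₂ c)
        = Complex.exp (B₁ - B₂) * Complex.exp (B₃ - B₄) := by
    rcases hcases with ⟨h1, h2, h3, h4⟩ | ⟨h1, h2, h3, h4⟩ | ⟨h1, h2, h3, h4⟩ |
        ⟨h1, h2, h3, h4⟩ <;>
      rw [h1, h2, h3, h4] <;>
      simp [sq, I_mul_I] <;> ring_nf <;> simp [I_sq]
  obtain ⟨hp2, hq2, hr2, hs2, hpq⟩ := key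
  intro z
  have e1 : Complex.exp B₁ = Complex.exp (B₁ - B₂) * Complex.exp B₂ := by
    rw [← Complex.exp_add]; ring_nf
  have e3 : Complex.exp B₃ = Complex.exp (B₃ - B₄) * Complex.exp B₄ := by
    rw [← Complex.exp_add]; ring_nf
  have hA1 : Complex.exp (L₁ z + Φ z + B₁)
      = Complex.exp (L₁ z + Φ z) * Complex.exp B₁ := Complex.exp_add _ _
  have hA2 : Complex.exp (L₁ z + Φ z + B₂)
      = Complex.exp (L₁ z + Φ z) * Complex.exp B₂ := Complex.exp_add _ _
  have hC3 : Complex.exp (L₂ z + Ψ z + B₃)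
      = Complex.exp (L₂ z + Ψ z) * Complex.exp B₃ := Complex.exp_add _ _
  have hC4 : Complex.exp (L₂ z + Ψ z + B₄)
      = Complex.exp (L₂ z + Ψ z) * Complex.exp B₄ := Complex.exp_add _ _
  have hA1' : Complex.exp (L₁ z + L₁ c + Φ z + B₁)
      = Complex.exp (L₁ z + Φ z) * Complex.exp B₁ * Complex.exp (L₁ c) := by
    rw [← Complex.exp_add, ← Complex.exp_add]; ring_nf
  have hA2' : Complex.exp (L₁ z + L₁ c + Φ z + B₂)
      = Complex.exp (L₁ z + Φ z) * Complex.exp B₂ * Complex.exp (L₁ c) := by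
    rw [← Complex.exp_add, ← Complex.exp_add]; ring_nf
  have hC3' : Complex.exp (L₂ z + L₂ c + Ψ z + B₃)
      = Complex.exp (L₂ z + Ψ z) * Complex.exp B₃ * Complex.exp (L₂ c) := by
    rw [← Complex.exp_add, ← Complex.exp_add]; ring_nf
  have hC4' : Complex.exp (L₂ z + L₂ c + Ψ z + B₄)
      = Complex.exp (L₂ z + Ψ z) * Complex.exp B₄ * Complex.exp (L₂ c) := by
    rw [← Complex.exp_add, ← Complex.exp_add]; ring_nf
  have hR13 : Complex.exp (L₁ z + L₂ z + Φ z + Ψ z + B₁ + B₃)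
      = Complex.exp (L₁ z + Φ z) * Complex.exp (L₂ z + Ψ z) *
        Complex.exp B₁ * Complex.exp B₃ := by
    rw [← Complex.exp_add, ← Complex.exp_add, ← Complex.exp_add]; ring_nf
  have hR24 : Complex.exp (L₁ z + L₂ z + Φ z + Ψ z + B₂ + B₄)
      = Complex.exp (L₁ z + Φ z) * Complex.exp (L₂ z + Ψ z) *
        Complex.exp B₂ * Complex.exp B₄ := by
    rw [← Complex.exp_add, ← Complex.exp_add, ← Complex.exp_add]; ring_nf
  set A := Complex.exp (L₁ z + Φ z)
  set C := Complex.exp (L₂ z + Ψ z)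
  set p := Complex.exp (L₁ c)
  set q := Complex.exp (L₂ c)
  set r := Complex.exp (B₁ - B₂)
  set s := Complex.exp (B₃ - B₄)
  constructor
  · rw [hf₁ z, hf₂ (z + c), hLadd₁, hLadd₂, hΦper, hΨper, hA1, hC3, hA2', hC4',
      hR13, e1, e3]
    linear_combination (A ^ 2 * Complex.exp B₂ ^ 2 / 4) * hr2 +
      (A ^ 2 * Complex.exp B₂ ^ 2 / 4) * hp2 +
      (C ^ 2 * Complex.exp B₄ ^ 2 / 4) * hs2 +
      (C ^ 2 * Complex.exp B₄ ^ 2 / 4) * hq2 +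
      (A * C * Complex.exp B₂ * Complex.exp B₄ / 2) * hpq
  · rw [hf₂ z, hf₁ (z + c), hLadd₁, hLadd₂, hΦper, hΨper, hA2, hC4, hA1', hC3',
      hR24, e1, e3]
    linear_combination (A ^ 2 * Complex.exp B₂ ^ 2 * r ^ 2 / 4) * hp2 -
      (A ^ 2 * Complex.exp B₂ ^ 2 / 4) * hr2 +
      (C ^ 2 * Complex.exp B₄ ^ 2 * s ^ 2 / 4) * hq2 -
      (C ^ 2 * Complex.exp B₄ ^ 2 / 4) * hs2 +
      (A * C * Complex.exp B₂ * Complex.exp B₄ * r * s / 2) * hpq +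
      (A * C * Complex.exp B₂ * Complex.exp B₄ * s ^ 2 / 2) * hr2 +
      (A * C * Complex.exp B₂ * Complex.exp B₄ / 2) * hs2
end

section
/- (Verification direction of Theorem 1, conclusion (iii).) Let n ≥ 1, c ∈ ℂⁿ, let L₁(z) = Σⱼ a₁ⱼ zⱼ and L₂(z) = Σⱼ a₂ⱼ zⱼ with a₁ⱼ, a₂ⱼ ∈ ℂ, let Φ, χ : ℂⁿ → ℂ be c-periodic polynomial functions, and let B₁, B₂, B₃, B₄ ∈ ℂ satisfy one of the following four sets of relations: (a) e^{L₁(c)} = 1, e^{L₂(c)} = 1, e^{B₁−B₂} = −i, e^{B₃−B₄} = i; (b) e^{L₁(c)} = 1, e^{L₂(c)} = −1, e^{B₁−B₂} = −i, e^{B₃−B₄} = −i; (c) e^{L₁(c)} = −1, e^{L₂(c)} = 1, e^{B₁−B₂} = i, e^{B₃−B₄} = i; (d) e^{L₁(c)} = −1, e^{L₂(c)} = −1, e^{B₁−B₂} = i, e^{B₃−B₄} = −i. Define f₁(z) = (1/2)(e^{L₁(z)+Φ(z)+B₁} + e^{L₂(z)+χ(z)+B₃}) and f₂(z) = (1/2)(e^{L₁(z)+Φ(z)+B₂}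 + e^{L₂(z)+χ(z)+B₄}). Then for all z ∈ ℂⁿ: f₁(z)² + f₂(z + c)² = e^{L₁(z)+L₂(z)+Φ(z)+χ(z)+B₁+B₃} and f₂(z)² + f₁(z + c)² = e^{L₁(z)+L₂(z)+Φ(z)+χ(z)+B₂+B₄}. -/
open Complex

private lemma stmt9_key (A B b₁ b₂ b₃ b₄ p q : ℂ)
    (hp : p ^ 2 = 1) (hq : q ^ 2 = 1)
    (h12 : b₁ ^ 2 + b₂ ^ 2 = 0) (h34 : b₃ ^ 2 + b₄ ^ 2 = 0)
    (hcr : b₁ * b₃ = p * q * (b₂ * b₄)) :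
    ((1/2) * (A * b₁ + B * b₃)) ^ 2 + ((1/2) * (A * (p * b₂) + B * (q * b₄))) ^ 2
      = A * B * (b₁ * b₃) ∧
    ((1/2) * (A * b₂ + B * b₄)) ^ 2 + ((1/2) * (A * (p * b₁) + B * (q * b₃))) ^ 2
      = A * B * (b₂ * b₄) := by
  constructor
  · linear_combination (A^2/4) * h12 + (A^2*b₂^2/4) * hp + (B^2/4) * h34
      + (B^2*b₄^2/4) * hq - (A*B/2) * hcr
  · linear_combination (A^2/4) * h12 + (A^2*b₁^2/4) * hp + (B^2/4) * h34
      + (B^2*b₃^2/4) * hq + (A*B*p*q/2) * hcr + (A*B*b₂*b₄*q^2/2) * hp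
      + (A*B*b₂*b₄/2) * hq


/-- Verification direction of Theorem 1, conclusion (iii). -/
theorem stmt_9 (n : ℕ) (hn : 1 ≤ n) (c : Fin n → ℂ)
    (a₁ a₂ : Fin n → ℂ) (L₁ L₂ : (Fin n → ℂ) → ℂ)
    (hL₁ : ∀ z, L₁ z = ∑ j, a₁ j * z j) (hL₂ : ∀ z, L₂ z = ∑ j, a₂ j * z j)
    (Φ χ : (Fin n → ℂ) → ℂ)
    (hΦpoly : ∃ p : MvPolynomial (Fin n) ℂ, ∀ z, Φ z = MvPolynomial.eval z p)
    (hχpoly : ∃ p : MvPolynomial (Fin n) ℂ, ∀ z, χ z = MvPolynomial.eval z p)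
    (hΦper : ∀ z, Φ (z + c) = Φ z) (hχper : ∀ z, χ (z + c) = χ z)
    (B₁ B₂ B₃ B₄ : ℂ)
    (hcases :
      (Complex.exp (L₁ c) = 1 ∧ Complex.exp (L₂ c) = 1 ∧
        Complex.exp (B₁ - B₂) = -I ∧ Complex.exp (B₃ - B₄) = I) ∨
      (Complex.exp (L₁ c) = 1 ∧ Complex.exp (L₂ c) = -1 ∧
        Complex.exp (B₁ - B₂) = -I ∧ Complex.exp (B₃ - B₄) = -I) ∨
      (Complex.exp (L₁ c) = -1 ∧ Complex.exp (L₂ c) = 1 ∧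
        Complex.exp (B₁ - B₂) = I ∧ Complex.exp (B₃ - B₄) = I) ∨
      (Complex.exp (L₁ c) = -1 ∧ Complex.exp (L₂ c) = -1 ∧
        Complex.exp (B₁ - B₂) = I ∧ Complex.exp (B₃ - B₄) = -I))
    (f₁ f₂ : (Fin n → ℂ) → ℂ)
    (hf₁ : ∀ z, f₁ z = (1 / 2) *
      (Complex.exp (L₁ z + Φ z + B₁) + Complex.exp (L₂ z + χ z + B₃)))
    (hf₂ : ∀ z, f₂ z = (1 / 2) *
      (Complex.exp (L₁ z + Φ z + B₂) + Complex.exp (L₂ z + χ z + B₄))) :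
    ∀ z, f₁ z ^ 2 + f₂ (z + c) ^ 2 =
            Complex.exp (L₁ z + L₂ z + Φ z + χ z + B₁ + B₃) ∧
         f₂ z ^ 2 + f₁ (z + c) ^ 2 =
            Complex.exp (L₁ z + L₂ z + Φ z + χ z + B₂ + B₄) := by
  -- linearity of L₁, L₂
  have hL₁c : ∀ z, L₁ (z + c) = L₁ z + L₁ c := by
    intro z
    simp only [hL₁, Pi.add_apply, mul_add, Finset.sum_add_distrib]
  have hL₂c : ∀ z, L₂ (z + c) = L₂ z + L₂ c := by
    intro z
    simp only [hL₂, Pi.add_apply, mul_add, Finset.sum_add_distrib]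
  -- abbreviations
  have hb1 : Complex.exp B₁ = Complex.exp (B₁ - B₂) * Complex.exp B₂ := by
    rw [← Complex.exp_add]; congr 1; ring
  have hb3 : Complex.exp B₃ = Complex.exp (B₃ - B₄) * Complex.exp B₄ := by
    rw [← Complex.exp_add]; congr 1; ring
  -- the five algebraic facts, uniform in the four cases
  have hfacts : (Complex.exp (L₁ c)) ^ 2 = 1 ∧ (Complex.exp (L₂ c)) ^ 2 = 1 ∧
      (Complex.exp B₁) ^ 2 + (Complex.exp B₂) ^ 2 = 0 ∧
      (Complex.exp B₃) ^ 2 + (Complex.exp B₄) ^ 2 = 0 ∧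
      Complex.exp B₁ * Complex.exp B₃ =
        Complex.exp (L₁ c) * Complex.exp (L₂ c) *
          (Complex.exp B₂ * Complex.exp B₄) := by
    rcases hcases with ⟨h1, h2, h3, h4⟩ | ⟨h1, h2, h3, h4⟩ | ⟨h1, h2, h3, h4⟩ |
        ⟨h1, h2, h3, h4⟩ <;>
      rw [h3] at hb1 <;> rw [h4] at hb3 <;>
      refine ⟨by rw [h1]; norm_num, by rw [h2]; norm_num, by
          rw [hb1]; linear_combination (Complex.exp B₂)^2 * Complex.I_sq, by
          rw [hb3]; linear_combination (Complex.exp B₄)^2 * Complex.I_sq, by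
          rw [hb1, hb3, h1, h2]
          first
          | linear_combination (-(Complex.exp B₂ * Complex.exp B₄)) * Complex.I_sq
          | linear_combination (Complex.exp B₂ * Complex.exp B₄) * Complex.I_sq⟩
  obtain ⟨hp, hq, h12, h34, hcr⟩ := hfacts
  intro z
  -- rewrite the four shifted/unshifted function values
  have e1 : f₁ z = (1/2) * (Complex.exp (L₁ z + Φ z) * Complex.exp B₁ +
      Complex.exp (L₂ z + χ z) * Complex.exp B₃) := by
    rw [hf₁, Complex.exp_add (L₁ z + Φ z) B₁, Complex.exp_add (L₂ z + χ z) B₃]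
  have e2 : f₂ z = (1/2) * (Complex.exp (L₁ z + Φ z) * Complex.exp B₂ +
      Complex.exp (L₂ z + χ z) * Complex.exp B₄) := by
    rw [hf₂, Complex.exp_add (L₁ z + Φ z) B₂, Complex.exp_add (L₂ z + χ z) B₄]
  have e1c : f₁ (z + c) = (1/2) * (Complex.exp (L₁ z + Φ z) *
      (Complex.exp (L₁ c) * Complex.exp B₁) + Complex.exp (L₂ z + χ z) *
      (Complex.exp (L₂ c) * Complex.exp B₃)) := by
    rw [hf₁, hL₁c, hL₂c, hΦper, hχper,
      show L₁ z + L₁ c + Φ z + B₁ = (L₁ z + Φ z) + (L₁ c + B₁) from by ring,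
      show L₂ z + L₂ c + χ z + B₃ = (L₂ z + χ z) + (L₂ c + B₃) from by ring,
      Complex.exp_add (L₁ z + Φ z) (L₁ c + B₁), Complex.exp_add (L₁ c) B₁,
      Complex.exp_add (L₂ z + χ z) (L₂ c + B₃), Complex.exp_add (L₂ c) B₃]
  have e2c : f₂ (z + c) = (1/2) * (Complex.exp (L₁ z + Φ z) *
      (Complex.exp (L₁ c) * Complex.exp B₂) + Complex.exp (L₂ z + χ z) *
      (Complex.exp (L₂ c) * Complex.exp B₄)) := by
    rw [hf₂, hL₁c, hL₂c, hΦper, hχper,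
      show L₁ z + L₁ c + Φ z + B₂ = (L₁ z + Φ z) + (L₁ c + B₂) from by ring,
      show L₂ z + L₂ c + χ z + B₄ = (L₂ z + χ z) + (L₂ c + B₄) from by ring,
      Complex.exp_add (L₁ z + Φ z) (L₁ c + B₂), Complex.exp_add (L₁ c) B₂,
      Complex.exp_add (L₂ z + χ z) (L₂ c + B₄), Complex.exp_add (L₂ c) B₄]
  have r1 : Complex.exp (L₁ z + L₂ z + Φ z + χ z + B₁ + B₃) =
      Complex.exp (L₁ z + Φ z) * Complex.exp (L₂ z + χ z) *
        (Complex.exp B₁ * Complex.exp B₃) := by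
    rw [← Complex.exp_add, ← Complex.exp_add, ← Complex.exp_add]; congr 1; ring
  have r2 : Complex.exp (L₁ z + L₂ z + Φ z + χ z + B₂ + B₄) =
      Complex.exp (L₁ z + Φ z) * Complex.exp (L₂ z + χ z) *
        (Complex.exp B₂ * Complex.exp B₄) := by
    rw [← Complex.exp_add, ← Complex.exp_add, ← Complex.exp_add]; congr 1; ring
  have key := stmt9_key (Complex.exp (L₁ z + Φ z)) (Complex.exp (L₂ z + χ z))
    (Complex.exp B₁) (Complex.exp B₂) (Complex.exp B₃) (Complex.exp B₄)
    (Complex.exp (L₁ c)) (Complex.exp (L₂ c)) hp hq h12 h34 hcr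
  constructor
  · rw [e1, e2c, r1]; linear_combination key.1
  · rw [e2, e1c, r2]; linear_combination key.2
end

section
/- (Verification direction of Theorem 2, conclusion (i).) Let c = (c₁, c₂) ∈ ℂ², k a positive integer, ξ₁, ξ₂ ∈ ℂ with ξⱼ ≠ 0 and ξⱼ⁴ ≠ 1 for j = 1, 2, a₁, a₂ ∈ ℂ with L(z) := a₁z₁ + a₂z₂, H : ℂ → ℂ a one-variable polynomial function with H(z₂ + c₂) = H(z₂) for all z₂, and B₁, B₂ ∈ ℂ satisfying exp(L(c)) = −(a₁/2)^{2k}·(ξ₁² − 1)(ξ₂² − 1)/((ξ₁² + 1)(ξ₂² + 1)) and exp(B₁ − B₂) = ξ₁²(ξ₂⁴ − 1)/(ξ₂²(ξ₁⁴ − 1)). Define f₁(z₁, z₂) = ((ξ₂² − 1)/(2iξ₂))·exp((L(z) + H(z₂) + B₂ − L(c))/2) and f₂(z₁, z₂) = ((ξ₁² − 1)/(2iξ₁))·exp((L(z) + H(z₂) + B₁ − L(c))/2). Then for all z ∈ ℂ²: (∂ᵏf₁/∂z₁ᵏ)(z)² + f₂(z + c)² = exp(L(z) + H(z₂) + B₁)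 and (∂ᵏf₂/∂z₁ᵏ)(z)² + f₁(z + c)² = exp(L(z) + H(z₂) + B₂). -/
open Complex

lemma iter_exp_aux (b d : ℂ) (k : ℕ) (A x : ℂ) :
    iteratedDeriv k (fun t => A * Complex.exp (b * t + d)) x
      = A * b ^ k * Complex.exp (b * x + d) := by
  induction k generalizing A with
  | zero => simp
  | succ n ih =>
    rw [iteratedDeriv_succ']
    have hder : (deriv fun t => A * Complex.exp (b * t + d))
        = fun t => (A * b) * Complex.exp (b * t + d) := by
      funext t
      have h : HasDerivAt (fun t : ℂ => A * Complex.exp (b * t + d))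
          (A * (Complex.exp (b * t + d) * (b * 1))) t :=
        (((hasDerivAt_id t).const_mul b).add_const d).cexp.const_mul A
      rw [h.deriv]; ring
    rw [hder, ih]; ring

/-- Verification direction of Theorem 2, conclusion (i). -/
theorem stmt_10 (c : ℂ × ℂ) (k : ℕ) (hk : 0 < k) (ξ₁ ξ₂ : ℂ)
    (hξ₁0 : ξ₁ ≠ 0) (hξ₂0 : ξ₂ ≠ 0) (hξ₁4 : ξ₁ ^ 4 ≠ 1) (hξ₂4 : ξ₂ ^ 4 ≠ 1)
    (a₁ a₂ : ℂ) (L : ℂ × ℂ → ℂ) (hL : ∀ z : ℂ × ℂ, L z = a₁ * z.1 + a₂ * z.2)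
    (H : ℂ → ℂ) (hHpoly : ∃ h : Polynomial ℂ, ∀ t, H t = Polynomial.eval t h)
    (hHper : ∀ t : ℂ, H (t + c.2) = H t)
    (B₁ B₂ : ℂ)
    (hLc : Complex.exp (L c) = -(a₁ / 2) ^ (2 * k) *
      ((ξ₁ ^ 2 - 1) * (ξ₂ ^ 2 - 1)) / ((ξ₁ ^ 2 + 1) * (ξ₂ ^ 2 + 1)))
    (hB : Complex.exp (B₁ - B₂) = ξ₁ ^ 2 * (ξ₂ ^ 4 - 1) / (ξ₂ ^ 2 * (ξ₁ ^ 4 - 1)))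
    (f₁ f₂ : ℂ × ℂ → ℂ)
    (hf₁ : ∀ z : ℂ × ℂ, f₁ z = ((ξ₂ ^ 2 - 1) / (2 * I * ξ₂)) *
      Complex.exp ((L z + H z.2 + B₂ - L c) / 2))
    (hf₂ : ∀ z : ℂ × ℂ, f₂ z = ((ξ₁ ^ 2 - 1) / (2 * I * ξ₁)) *
      Complex.exp ((L z + H z.2 + B₁ - L c) / 2)) :
    ∀ z : ℂ × ℂ,
      (iteratedDeriv k (fun t => f₁ (t, z.2)) z.1) ^ 2 + f₂ (z + c) ^ 2 =
        Complex.exp (L z + H z.2 + B₁) ∧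
      (iteratedDeriv k (fun t => f₂ (t, z.2)) z.1) ^ 2 + f₁ (z + c) ^ 2 =
        Complex.exp (L z + H z.2 + B₂) := by
  intro z
  -- nonzero facts
  have hp1 : ξ₁ ^ 2 + 1 ≠ 0 := by
    intro h; apply hξ₁4
    have h2 : ξ₁ ^ 2 = -1 := by linear_combination h
    calc ξ₁ ^ 4 = (ξ₁ ^ 2) ^ 2 := by ring
      _ = 1 := by rw [h2]; ring
  have hm1 : ξ₁ ^ 2 - 1 ≠ 0 := by
    intro h; apply hξ₁4
    have h2 : ξ₁ ^ 2 = 1 := by linear_combination h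
    calc ξ₁ ^ 4 = (ξ₁ ^ 2) ^ 2 := by ring
      _ = 1 := by rw [h2]; ring
  have hp2 : ξ₂ ^ 2 + 1 ≠ 0 := by
    intro h; apply hξ₂4
    have h2 : ξ₂ ^ 2 = -1 := by linear_combination h
    calc ξ₂ ^ 4 = (ξ₂ ^ 2) ^ 2 := by ring
      _ = 1 := by rw [h2]; ring
  have hm2 : ξ₂ ^ 2 - 1 ≠ 0 := by
    intro h; apply hξ₂4
    have h2 : ξ₂ ^ 2 = 1 := by linear_combination h
    calc ξ₂ ^ 4 = (ξ₂ ^ 2) ^ 2 := by ring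
      _ = 1 := by rw [h2]; ring
  have h41 : ξ₁ ^ 4 - 1 ≠ 0 := sub_ne_zero.mpr hξ₁4
  have h42 : ξ₂ ^ 4 - 1 ≠ 0 := sub_ne_zero.mpr hξ₂4
  have ha₁ : a₁ ≠ 0 := by
    intro h
    have he := Complex.exp_ne_zero (L c)
    rw [hLc, h] at he
    apply he
    rw [zero_div, zero_pow (by omega : 2 * k ≠ 0)]
    ring
  have hsqe : ∀ w : ℂ, Complex.exp (w / 2) ^ 2 = Complex.exp w := fun w => by
    rw [sq, ← Complex.exp_add, add_halves]
  -- derivative computations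
  have hd₁ : iteratedDeriv k (fun t => f₁ (t, z.2)) z.1
      = ((ξ₂ ^ 2 - 1) / (2 * I * ξ₂)) * (a₁ / 2) ^ k *
        Complex.exp ((L z + H z.2 + B₂ - L c) / 2) := by
    have hfun : (fun t => f₁ (t, z.2)) = fun t => ((ξ₂ ^ 2 - 1) / (2 * I * ξ₂)) *
        Complex.exp ((a₁ / 2) * t + ((a₂ * z.2 + H z.2 + B₂ - L c) / 2)) := by
      funext t
      rw [hf₁, hL (t, z.2)]
      rw [show (a₁ * (t, z.2).1 + a₂ * (t, z.2).2 + H (t, z.2).2 + B₂ - L c) / 2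
        = (a₁ / 2) * t + ((a₂ * z.2 + H z.2 + B₂ - L c) / 2) from by ring]
    have harg : (a₁ / 2) * z.1 + (a₂ * z.2 + H z.2 + B₂ - L c) / 2
        = (L z + H z.2 + B₂ - L c) / 2 := by rw [hL z]; ring
    rw [hfun, iter_exp_aux, harg]
  have hd₂ : iteratedDeriv k (fun t => f₂ (t, z.2)) z.1
      = ((ξ₁ ^ 2 - 1) / (2 * I * ξ₁)) * (a₁ / 2) ^ k *
        Complex.exp ((L z + H z.2 + B₁ - L c) / 2) := by
    have hfun : (fun t => f₂ (t, z.2)) = fun t => ((ξ₁ ^ 2 - 1) / (2 * I * ξ₁)) *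
        Complex.exp ((a₁ / 2) * t + ((a₂ * z.2 + H z.2 + B₁ - L c) / 2)) := by
      funext t
      rw [hf₂, hL (t, z.2)]
      rw [show (a₁ * (t, z.2).1 + a₂ * (t, z.2).2 + H (t, z.2).2 + B₁ - L c) / 2
        = (a₁ / 2) * t + ((a₂ * z.2 + H z.2 + B₁ - L c) / 2) from by ring]
    have harg : (a₁ / 2) * z.1 + (a₂ * z.2 + H z.2 + B₁ - L c) / 2
        = (L z + H z.2 + B₁ - L c) / 2 := by rw [hL z]; ring
    rw [hfun, iter_exp_aux, harg]
  -- shifted values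
  have hzc : (z + c).2 = z.2 + c.2 := rfl
  have hLzc : L (z + c) = L z + L c := by
    rw [hL, hL, hL]
    show a₁ * (z.1 + c.1) + a₂ * (z.2 + c.2) = _
    ring
  have hf₂c : f₂ (z + c) = ((ξ₁ ^ 2 - 1) / (2 * I * ξ₁)) *
      Complex.exp ((L z + H z.2 + B₁) / 2) := by
    rw [hf₂, hzc, hHper, hLzc]
    congr 2
    ring
  have hf₁c : f₁ (z + c) = ((ξ₂ ^ 2 - 1) / (2 * I * ξ₂)) *
      Complex.exp ((L z + H z.2 + B₂) / 2) := by
    rw [hf₁, hzc, hHper, hLzc]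
    congr 2
    ring
  have heB : Complex.exp B₁ = Complex.exp (B₁ - B₂) * Complex.exp B₂ := by
    rw [← Complex.exp_add, sub_add_cancel]
  have hpowk : (a₁ / 2) ^ (2 * k) = ((a₁ / 2) ^ k) ^ 2 := by
    rw [← pow_mul, mul_comm]
  set W := (a₁ / 2) ^ k with hW
  have i1 : (2 * I * ξ₁) ^ 2 = -(4 * ξ₁ ^ 2) := by rw [mul_pow, mul_pow, I_sq]; ring
  have i2 : (2 * I * ξ₂) ^ 2 = -(4 * ξ₂ ^ 2) := by rw [mul_pow, mul_pow, I_sq]; ring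
  have n1 : -(4 * ξ₂ ^ 2) ≠ 0 := by simpa using pow_ne_zero 2 hξ₂0
  have n2 : -(4 * ξ₁ ^ 2) ≠ 0 := by simpa using pow_ne_zero 2 hξ₁0
  have hQ1 : (ξ₁ ^ 2 + 1) * (ξ₂ ^ 2 + 1) ≠ 0 := mul_ne_zero hp1 hp2
  have hQ2 : ξ₂ ^ 2 * (ξ₁ ^ 4 - 1) ≠ 0 := mul_ne_zero (pow_ne_zero 2 hξ₂0) h41
  have hD : ξ₂ ^ 2 * (ξ₁ ^ 2 + 1) ^ 2 ≠ 0 :=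
    mul_ne_zero (pow_ne_zero 2 hξ₂0) (pow_ne_zero 2 hp1)
  have hvu : Complex.exp (L c) * Complex.exp (B₁ - B₂)
      = -W ^ 2 * ξ₁ ^ 2 * (ξ₂ ^ 2 - 1) ^ 2 / (ξ₂ ^ 2 * (ξ₁ ^ 2 + 1) ^ 2) := by
    rw [hLc, hB, hpowk, div_mul_div_comm, div_eq_div_iff (mul_ne_zero hQ1 hQ2) hD]
    ring
  have key1 : ((ξ₂ ^ 2 - 1) / (2 * I * ξ₂)) ^ 2 * W ^ 2 +
      ((ξ₁ ^ 2 - 1) / (2 * I * ξ₁)) ^ 2 * (Complex.exp (L c) * Complex.exp (B₁ - B₂)) =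
      Complex.exp (L c) * Complex.exp (B₁ - B₂) := by
    rw [hvu, div_pow, div_pow, i1, i2, div_mul_eq_mul_div, div_mul_div_comm,
      div_add_div _ _ n1 (mul_ne_zero n2 hD),
      div_eq_div_iff (mul_ne_zero n1 (mul_ne_zero n2 hD)) hD]
    ring
  have key2 : ((ξ₁ ^ 2 - 1) / (2 * I * ξ₁)) ^ 2 * W ^ 2 * Complex.exp (B₁ - B₂) +
      ((ξ₂ ^ 2 - 1) / (2 * I * ξ₂)) ^ 2 * Complex.exp (L c) = Complex.exp (L c) := by
    rw [hLc, hB, hpowk, div_pow, div_pow, i1, i2, div_mul_eq_mul_div, div_mul_div_comm,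
      div_mul_div_comm, div_add_div _ _ (mul_ne_zero n2 hQ2) (mul_ne_zero n1 hQ1),
      div_eq_div_iff (mul_ne_zero (mul_ne_zero n2 hQ2) (mul_ne_zero n1 hQ1)) hQ1]
    ring
  have hv : Complex.exp (L c) ≠ 0 := Complex.exp_ne_zero _
  have e2 : Complex.exp (B₁ - B₂) * Complex.exp (L z + H z.2 + B₂)
      = Complex.exp (L z + H z.2 + B₁) := by
    rw [← Complex.exp_add]; congr 1; ring
  have e1 : Complex.exp (L z + H z.2 + B₂ - L c) * Complex.exp (L c)
      = Complex.exp (L z + H z.2 + B₂) := by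
    rw [← Complex.exp_add]; congr 1; ring
  have eY : Complex.exp (L z + H z.2 + B₁ - L c) * Complex.exp (L c)
      = Complex.exp (L z + H z.2 + B₁) := by
    rw [← Complex.exp_add]; congr 1; ring
  constructor
  · rw [hd₁, hf₂c]
    simp only [mul_pow, hsqe]
    apply mul_right_cancel₀ hv
    linear_combination Complex.exp (L z + H z.2 + B₂) * key1 +
      ((ξ₂ ^ 2 - 1) / (2 * I * ξ₂)) ^ 2 * W ^ 2 * e1 +
      (1 - ((ξ₁ ^ 2 - 1) / (2 * I * ξ₁)) ^ 2) * Complex.exp (L c) * e2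
  · rw [hd₂, hf₁c]
    simp only [mul_pow, hsqe]
    apply mul_right_cancel₀ hv
    linear_combination ((ξ₁ ^ 2 - 1) / (2 * I * ξ₁)) ^ 2 * W ^ 2 * eY +
      Complex.exp (L z + H z.2 + B₂) * key2 -
      ((ξ₁ ^ 2 - 1) / (2 * I * ξ₁)) ^ 2 * W ^ 2 * e2
end

section
/- (Verification direction of Theorem 2, conclusion (ii).) Let c = (c₁, c₂) ∈ ℂ², k a positive integer, L₁(z) = a₁₁z₁ + a₁₂z₂ and L₂(z) = a₂₁z₁ + a₂₂z₂ with a₁₁, a₁₂, a₂₁, a₂₂ ∈ ℂ, let H₁, H₂ : ℂ → ℂ be one-variable polynomial functions with Hⱼ(z₂ + c₂) = Hⱼ(z₂) for all z₂ (j = 1, 2), and let B₁, B₂, B₃, B₄ ∈ ℂ satisfy one of: (a) e^{L₁(c)} = i·a₁₁ᵏ, e^{L₂(c)} = i·a₂₁ᵏ, e^{B₁−B₂} = −1, e^{B₃−B₄} = 1; (b) e^{L₁(c)} = i·a₁₁ᵏ, e^{L₂(c)} = −i·a₂₁ᵏ, e^{B₁−B₂} = −1, e^{B₃−B₄} = −1;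 (c) e^{L₁(c)} = −i·a₁₁ᵏ, e^{L₂(c)} = i·a₂₁ᵏ, e^{B₁−B₂} = 1, e^{B₃−B₄} = 1; (d) e^{L₁(c)} = −i·a₁₁ᵏ, e^{L₂(c)} = −i·a₂₁ᵏ, e^{B₁−B₂} = 1, e^{B₃−B₄} = −1. Define f₁(z) = (1/(2i))(e^{L₁(z)+H₁(z₂)−L₁(c)+B₂} − e^{L₂(z)+H₂(z₂)−L₂(c)+B₄}) and f₂(z) = (1/(2i))(e^{L₁(z)+H₁(z₂)−L₁(c)+B₁} − e^{L₂(z)+H₂(z₂)−L₂(c)+B₃}). Then for all z ∈ ℂ²: (∂ᵏf₁/∂z₁ᵏ)(z)² + f₂(z + c)² = e^{L₁(z)+L₂(z)+H₁(z₂)+H₂(z₂)+B₁+B₃} and (∂ᵏf₂/∂z₁ᵏ)(z)² + f₁(z + c)² = e^{L₁(z)+L₂(z)+H₁(z₂)+H₂(z₂)+B₂+B₄}. -/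
open Complex

lemma iter_key (C a b a' b' : ℂ) : ∀ n : ℕ,
    iteratedDeriv n (fun t => C * (Complex.exp (a*t+b) - Complex.exp (a'*t+b'))) =
    fun t => C * (a^n * Complex.exp (a*t+b) - a'^n * Complex.exp (a'*t+b')) := by
  intro n
  induction n with
  | zero => simp [iteratedDeriv_zero]
  | succ n ih =>
    rw [iteratedDeriv_succ, ih]
    funext t
    have h1 : HasDerivAt (fun t => Complex.exp (a*t+b)) (Complex.exp (a*t+b) * (a*1)) t :=
      (((hasDerivAt_id t).const_mul a).add_const b).cexp
    have h2 : HasDerivAt (fun t => Complex.exp (a'*t+b')) (Complex.exp (a'*t+b') * (a'*1)) t :=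
      (((hasDerivAt_id t).const_mul a').add_const b').cexp
    have h3 := (((h1.const_mul (a^n)).sub (h2.const_mul (a'^n))).const_mul C).deriv
    simp only [Pi.sub_apply] at h3; rw [h3]; ring

lemma alg_helper (E₁ E₂ b₂ b₄ ε₁ ε₂ : ℂ)
    (hε₁ : ε₁ = 1 ∨ ε₁ = -1) (hε₂ : ε₂ = 1 ∨ ε₂ = -1) :
    ((1/(2*I)) * (-ε₁*I*(E₁*b₂) - -ε₂*I*(E₂*b₄)))^2 +
      ((1/(2*I)) * (E₁*(-ε₁*b₂) - E₂*(ε₂*b₄)))^2 = E₁*E₂*((-ε₁*b₂)*(ε₂*b₄)) := by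
  have hI := Complex.I_ne_zero
  rcases hε₁ with rfl | rfl <;> rcases hε₂ with rfl | rfl <;> field_simp <;>
    first
      | linear_combination (E₁^2*b₂^2 + E₂^2*b₄^2 + 2*E₁*E₂*b₂*b₄) * Complex.I_sq
      | linear_combination (E₁^2*b₂^2 + E₂^2*b₄^2 - 2*E₁*E₂*b₂*b₄) * Complex.I_sq

lemma alg_helper2 (E₁ E₂ b₂ b₄ ε₁ ε₂ : ℂ)
    (hε₁ : ε₁ = 1 ∨ ε₁ = -1) (hε₂ : ε₂ = 1 ∨ ε₂ = -1) :
    ((1/(2*I)) * (-ε₁*I*(E₁*(-ε₁*b₂)) - -ε₂*I*(E₂*(ε₂*b₄))))^2 +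
      ((1/(2*I)) * (E₁*b₂ - E₂*b₄))^2 = E₁*E₂*(b₂*b₄) := by
  have hI := Complex.I_ne_zero
  rcases hε₁ with rfl | rfl <;> rcases hε₂ with rfl | rfl <;> field_simp <;>
    first
      | linear_combination (E₁^2*b₂^2 + E₂^2*b₄^2 + 2*E₁*E₂*b₂*b₄) * Complex.I_sq
      | linear_combination (E₁^2*b₂^2 + E₂^2*b₄^2 - 2*E₁*E₂*b₂*b₄) * Complex.I_sq

/-- Verification direction of Theorem 2, conclusion (ii). -/
theorem stmt_11 (c : ℂ × ℂ) (k : ℕ) (hk : 0 < k)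
    (a₁₁ a₁₂ a₂₁ a₂₂ : ℂ) (L₁ L₂ : ℂ × ℂ → ℂ)
    (hL₁ : ∀ z : ℂ × ℂ, L₁ z = a₁₁ * z.1 + a₁₂ * z.2)
    (hL₂ : ∀ z : ℂ × ℂ, L₂ z = a₂₁ * z.1 + a₂₂ * z.2)
    (H₁ H₂ : ℂ → ℂ)
    (hH₁poly : ∃ h : Polynomial ℂ, ∀ t, H₁ t = Polynomial.eval t h)
    (hH₂poly : ∃ h : Polynomial ℂ, ∀ t, H₂ t = Polynomial.eval t h)
    (hH₁per : ∀ t : ℂ, H₁ (t + c.2) = H₁ t)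
    (hH₂per : ∀ t : ℂ, H₂ (t + c.2) = H₂ t)
    (B₁ B₂ B₃ B₄ : ℂ)
    (hcases :
      (Complex.exp (L₁ c) = I * a₁₁ ^ k ∧ Complex.exp (L₂ c) = I * a₂₁ ^ k ∧
        Complex.exp (B₁ - B₂) = -1 ∧ Complex.exp (B₃ - B₄) = 1) ∨
      (Complex.exp (L₁ c) = I * a₁₁ ^ k ∧ Complex.exp (L₂ c) = -(I * a₂₁ ^ k) ∧
        Complex.exp (B₁ - B₂) = -1 ∧ Complex.exp (B₃ - B₄) = -1) ∨
      (Complex.exp (L₁ c) = -(I * a₁₁ ^ k) ∧ Complex.exp (L₂ c) = I * a₂₁ ^ k ∧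
        Complex.exp (B₁ - B₂) = 1 ∧ Complex.exp (B₃ - B₄) = 1) ∨
      (Complex.exp (L₁ c) = -(I * a₁₁ ^ k) ∧ Complex.exp (L₂ c) = -(I * a₂₁ ^ k) ∧
        Complex.exp (B₁ - B₂) = 1 ∧ Complex.exp (B₃ - B₄) = -1))
    (f₁ f₂ : ℂ × ℂ → ℂ)
    (hf₁ : ∀ z : ℂ × ℂ, f₁ z = (1 / (2 * I)) *
      (Complex.exp (L₁ z + H₁ z.2 - L₁ c + B₂) - Complex.exp (L₂ z + H₂ z.2 - L₂ c + B₄)))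
    (hf₂ : ∀ z : ℂ × ℂ, f₂ z = (1 / (2 * I)) *
      (Complex.exp (L₁ z + H₁ z.2 - L₁ c + B₁) - Complex.exp (L₂ z + H₂ z.2 - L₂ c + B₃))) :
    ∀ z : ℂ × ℂ,
      (iteratedDeriv k (fun t => f₁ (t, z.2)) z.1) ^ 2 + f₂ (z + c) ^ 2 =
        Complex.exp (L₁ z + L₂ z + H₁ z.2 + H₂ z.2 + B₁ + B₃) ∧
      (iteratedDeriv k (fun t => f₂ (t, z.2)) z.1) ^ 2 + f₁ (z + c) ^ 2 =
        Complex.exp (L₁ z + L₂ z + H₁ z.2 + H₂ z.2 + B₂ + B₄) := by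
  obtain ⟨ε₁, ε₂, hε₁, hε₂, hP, hQ, h12, h34⟩ :
      ∃ ε₁ ε₂ : ℂ, (ε₁ = 1 ∨ ε₁ = -1) ∧ (ε₂ = 1 ∨ ε₂ = -1) ∧
        Complex.exp (L₁ c) = ε₁ * (I * a₁₁ ^ k) ∧
        Complex.exp (L₂ c) = ε₂ * (I * a₂₁ ^ k) ∧
        Complex.exp (B₁ - B₂) = -ε₁ ∧ Complex.exp (B₃ - B₄) = ε₂ := by
    rcases hcases with ⟨h1,h2,h3,h4⟩ | ⟨h1,h2,h3,h4⟩ | ⟨h1,h2,h3,h4⟩ | ⟨h1,h2,h3,h4⟩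
    · exact ⟨1, 1, Or.inl rfl, Or.inl rfl, by simpa using h1, by simpa using h2,
        by simpa using h3, by simpa using h4⟩
    · exact ⟨1, -1, Or.inl rfl, Or.inr rfl, by simpa using h1, by rw [h2]; ring,
        by simpa using h3, by simpa using h4⟩
    · exact ⟨-1, 1, Or.inr rfl, Or.inl rfl, by rw [h1]; ring, by simpa using h2,
        by simpa using h3, by simpa using h4⟩
    · exact ⟨-1, -1, Or.inr rfl, Or.inr rfl, by rw [h1]; ring, by rw [h2]; ring,
        by simpa using h3, by simpa using h4⟩
  have hPne : Complex.exp (L₁ c) ≠ 0 := Complex.exp_ne_zero _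
  have hQne : Complex.exp (L₂ c) ≠ 0 := Complex.exp_ne_zero _
  have hAk : (a₁₁ : ℂ) ^ k = -ε₁ * I * Complex.exp (L₁ c) := by
    rcases hε₁ with rfl | rfl <;> rw [hP] <;> linear_combination (a₁₁^k) * Complex.I_sq
  have hBk : (a₂₁ : ℂ) ^ k = -ε₂ * I * Complex.exp (L₂ c) := by
    rcases hε₂ with rfl | rfl <;> rw [hQ] <;> linear_combination (a₂₁^k) * Complex.I_sq
  have hb1 : Complex.exp B₁ = -ε₁ * Complex.exp B₂ := by
    rw [Complex.exp_sub, div_eq_iff (Complex.exp_ne_zero _)] at h12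
    rw [h12]
  have hb3 : Complex.exp B₃ = ε₂ * Complex.exp B₄ := by
    rw [Complex.exp_sub, div_eq_iff (Complex.exp_ne_zero _)] at h34
    rw [h34]
  intro z
  set E₁ := Complex.exp (L₁ z + H₁ z.2) with hE₁
  set E₂ := Complex.exp (L₂ z + H₂ z.2) with hE₂
  -- exponent rewriting lemmas
  have e1 : ∀ W : ℂ, Complex.exp (a₁₁*z.1 + (a₁₂*z.2 + H₁ z.2 - L₁ c + W)) =
      E₁ * Complex.exp W * (Complex.exp (L₁ c))⁻¹ := by
    intro W
    rw [hE₁, ← Complex.exp_neg, ← Complex.exp_add, ← Complex.exp_add]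
    congr 1
    simp only [hL₁]; ring
  have e2 : ∀ W : ℂ, Complex.exp (a₂₁*z.1 + (a₂₂*z.2 + H₂ z.2 - L₂ c + W)) =
      E₂ * Complex.exp W * (Complex.exp (L₂ c))⁻¹ := by
    intro W
    rw [hE₂, ← Complex.exp_neg, ← Complex.exp_add, ← Complex.exp_add]
    congr 1
    simp only [hL₂]; ring
  have m1 : ∀ W : ℂ, a₁₁^k * Complex.exp (a₁₁*z.1 + (a₁₂*z.2 + H₁ z.2 - L₁ c + W)) =
      -ε₁*I*(E₁ * Complex.exp W) := by
    intro W; rw [e1 W, hAk]; field_simp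
  have m2 : ∀ W : ℂ, a₂₁^k * Complex.exp (a₂₁*z.1 + (a₂₂*z.2 + H₂ z.2 - L₂ c + W)) =
      -ε₂*I*(E₂ * Complex.exp W) := by
    intro W; rw [e2 W, hBk]; field_simp
  have hfun₁ : (fun t => f₁ (t, z.2)) = fun t => (1/(2*I)) *
      (Complex.exp (a₁₁*t + (a₁₂*z.2 + H₁ z.2 - L₁ c + B₂)) -
       Complex.exp (a₂₁*t + (a₂₂*z.2 + H₂ z.2 - L₂ c + B₄))) := by
    funext t
    rw [hf₁]
    simp only [hL₁, hL₂]
    ring_nf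
  have hfun₂ : (fun t => f₂ (t, z.2)) = fun t => (1/(2*I)) *
      (Complex.exp (a₁₁*t + (a₁₂*z.2 + H₁ z.2 - L₁ c + B₁)) -
       Complex.exp (a₂₁*t + (a₂₂*z.2 + H₂ z.2 - L₂ c + B₃))) := by
    funext t
    rw [hf₂]
    simp only [hL₁, hL₂]
    ring_nf
  have hc1 : ∀ W : ℂ, Complex.exp (L₁ (z+c) + H₁ (z+c).2 - L₁ c + W) =
      E₁ * Complex.exp W := by
    intro W
    rw [hE₁, ← Complex.exp_add]
    congr 1
    simp only [hL₁, Prod.fst_add, Prod.snd_add, hH₁per]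
    ring
  have hc2 : ∀ W : ℂ, Complex.exp (L₂ (z+c) + H₂ (z+c).2 - L₂ c + W) =
      E₂ * Complex.exp W := by
    intro W
    rw [hE₂, ← Complex.exp_add]
    congr 1
    simp only [hL₂, Prod.fst_add, Prod.snd_add, hH₂per]
    ring
  have hf2c : f₂ (z + c) = (1/(2*I)) * (E₁ * (-ε₁ * Complex.exp B₂) - E₂ * (ε₂ * Complex.exp B₄)) := by
    rw [hf₂, hc1, hc2, hb1, hb3]
  have hf1c : f₁ (z + c) = (1/(2*I)) * (E₁ * Complex.exp B₂ - E₂ * Complex.exp B₄) := by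
    rw [hf₁, hc1, hc2]
  have rhs1 : Complex.exp (L₁ z + L₂ z + H₁ z.2 + H₂ z.2 + B₁ + B₃) =
      E₁ * E₂ * ((-ε₁ * Complex.exp B₂) * (ε₂ * Complex.exp B₄)) := by
    rw [hE₁, hE₂, ← hb1, ← hb3, ← Complex.exp_add, ← Complex.exp_add, ← Complex.exp_add]
    congr 1; ring
  have rhs2 : Complex.exp (L₁ z + L₂ z + H₁ z.2 + H₂ z.2 + B₂ + B₄) =
      E₁ * E₂ * (Complex.exp B₂ * Complex.exp B₄) := by
    rw [hE₁, hE₂, ← Complex.exp_add, ← Complex.exp_add, ← Complex.exp_add]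
    congr 1; ring
  constructor
  · rw [hfun₁, iter_key]
    simp only
    rw [m1 B₂, m2 B₄, hf2c, rhs1]
    exact alg_helper E₁ E₂ (Complex.exp B₂) (Complex.exp B₄) ε₁ ε₂ hε₁ hε₂
  · rw [hfun₂, iter_key]
    simp only
    rw [m1 B₁, m2 B₃, hf1c, rhs2, hb1, hb3]
    exact alg_helper2 E₁ E₂ (Complex.exp B₂) (Complex.exp B₄) ε₁ ε₂ hε₁ hε₂
end

section
/- (Verification direction of Theorem 2, conclusion (iii).) Let c = (c₁, c₂) ∈ ℂ², k a positive integer, L₁(z) = a₁₁z₁ + a₁₂z₂ and L₂(z) = a₂₁z₁ + a₂₂z₂ with a₁₁, a₁₂, a₂₁, a₂₂ ∈ ℂ, let H₁, H₂ : ℂ → ℂ be one-variable polynomial functions with Hⱼ(z₂ + c₂) = Hⱼ(z₂) for all z₂ (j = 1, 2), and let B₁, B₂, B₃, B₄ ∈ ℂ satisfy one of: (a) e^{L₁(c)} = a₁₁ᵏ, e^{L₂(c)} = a₂₁ᵏ, e^{B₁−B₂} = i, e^{B₃−B₄} = −i; (b) e^{L₁(c)} = a₁₁ᵏ, e^{L₂(c)}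 = −a₂₁ᵏ, e^{B₁−B₂} = i, e^{B₃−B₄} = i; (c) e^{L₁(c)} = −a₁₁ᵏ, e^{L₂(c)} = a₂₁ᵏ, e^{B₁−B₂} = −i, e^{B₃−B₄} = −i; (d) e^{L₁(c)} = −a₁₁ᵏ, e^{L₂(c)} = −a₂₁ᵏ, e^{B₁−B₂} = −i, e^{B₃−B₄} = i. Define f₁(z) = −(1/(2i))(e^{L₁(z)+H₁(z₂)−L₁(c)+B₂} − e^{L₂(z)+H₂(z₂)−L₂(c)+B₄}) and f₂(z) = (1/(2i))(e^{L₁(z)+H₁(z₂)−L₁(c)+B₁} − e^{L₂(z)+H₂(z₂)−L₂(c)+B₃}). Then for all z ∈ ℂ²: (∂ᵏf₁/∂z₁ᵏ)(z)² + f₂(z + c)² = e^{L₁(z)+L₂(z)+H₁(z₂)+H₂(z₂)+B₁+B₃} and (∂ᵏf₂/∂z₁ᵏ)(z)² + f₁(z + c)² = e^{L₁(z)+L₂(z)+H₁(z₂)+H₂(z₂)+B₂+B₄}. -/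
open Complex

lemma expDeriv_aux (a₁ a₂ : ℂ) : ∀ (k : ℕ) (C₁ C₂ x : ℂ),
    iteratedDeriv k (fun t => C₁ * Complex.exp (a₁*t) + C₂ * Complex.exp (a₂*t)) x
      = C₁*a₁^k*Complex.exp (a₁*x) + C₂*a₂^k*Complex.exp (a₂*x) := by
  intro k
  induction k with
  | zero => intro C₁ C₂ x; simp
  | succ n ih =>
    intro C₁ C₂ x
    rw [iteratedDeriv_succ']
    have hd : (deriv fun t => C₁ * Complex.exp (a₁*t) + C₂ * Complex.exp (a₂*t))
        = fun t => (C₁*a₁) * Complex.exp (a₁*t) + (C₂*a₂) * Complex.exp (a₂*t) := by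
      funext t
      have h1 : HasDerivAt (fun t => C₁ * Complex.exp (a₁*t) + C₂ * Complex.exp (a₂*t))
          (C₁ * (Complex.exp (a₁*t) * (a₁*1)) + C₂ * (Complex.exp (a₂*t) * (a₂*1))) t := by
        exact
        ((((hasDerivAt_id t).const_mul a₁).cexp).const_mul C₁).add
          ((((hasDerivAt_id t).const_mul a₂).cexp).const_mul C₂)
      rw [h1.deriv]; ring
    rw [hd, ih (C₁*a₁) (C₂*a₂) x]; ring

lemma hdivI_aux : (1:ℂ)/(2*I) = -I/2 := by
  rw [div_eq_iff (mul_ne_zero two_ne_zero I_ne_zero)]; linear_combination Complex.I_sq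

set_option maxHeartbeats 1000000 in
/-- Verification direction of Theorem 2, conclusion (iii). -/
theorem stmt_12 (c : ℂ × ℂ) (k : ℕ) (hk : 0 < k)
    (a₁₁ a₁₂ a₂₁ a₂₂ : ℂ) (L₁ L₂ : ℂ × ℂ → ℂ)
    (hL₁ : ∀ z : ℂ × ℂ, L₁ z = a₁₁ * z.1 + a₁₂ * z.2)
    (hL₂ : ∀ z : ℂ × ℂ, L₂ z = a₂₁ * z.1 + a₂₂ * z.2)
    (H₁ H₂ : ℂ → ℂ)
    (hH₁poly : ∃ h : Polynomial ℂ, ∀ t, H₁ t = Polynomial.eval t h)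
    (hH₂poly : ∃ h : Polynomial ℂ, ∀ t, H₂ t = Polynomial.eval t h)
    (hH₁per : ∀ t : ℂ, H₁ (t + c.2) = H₁ t)
    (hH₂per : ∀ t : ℂ, H₂ (t + c.2) = H₂ t)
    (B₁ B₂ B₃ B₄ : ℂ)
    (hcases :
      (Complex.exp (L₁ c) = a₁₁ ^ k ∧ Complex.exp (L₂ c) = a₂₁ ^ k ∧
        Complex.exp (B₁ - B₂) = I ∧ Complex.exp (B₃ - B₄) = -I) ∨
      (Complex.exp (L₁ c) = a₁₁ ^ k ∧ Complex.exp (L₂ c) = -(a₂₁ ^ k) ∧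
        Complex.exp (B₁ - B₂) = I ∧ Complex.exp (B₃ - B₄) = I) ∨
      (Complex.exp (L₁ c) = -(a₁₁ ^ k) ∧ Complex.exp (L₂ c) = a₂₁ ^ k ∧
        Complex.exp (B₁ - B₂) = -I ∧ Complex.exp (B₃ - B₄) = -I) ∨
      (Complex.exp (L₁ c) = -(a₁₁ ^ k) ∧ Complex.exp (L₂ c) = -(a₂₁ ^ k) ∧
        Complex.exp (B₁ - B₂) = -I ∧ Complex.exp (B₃ - B₄) = I))
    (f₁ f₂ : ℂ × ℂ → ℂ)
    (hf₁ : ∀ z : ℂ × ℂ, f₁ z = -((1 / (2 * I)) *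
      (Complex.exp (L₁ z + H₁ z.2 - L₁ c + B₂) - Complex.exp (L₂ z + H₂ z.2 - L₂ c + B₄))))
    (hf₂ : ∀ z : ℂ × ℂ, f₂ z = (1 / (2 * I)) *
      (Complex.exp (L₁ z + H₁ z.2 - L₁ c + B₁) - Complex.exp (L₂ z + H₂ z.2 - L₂ c + B₃))) :
    ∀ z : ℂ × ℂ,
      (iteratedDeriv k (fun t => f₁ (t, z.2)) z.1) ^ 2 + f₂ (z + c) ^ 2 =
        Complex.exp (L₁ z + L₂ z + H₁ z.2 + H₂ z.2 + B₁ + B₃) ∧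
      (iteratedDeriv k (fun t => f₂ (t, z.2)) z.1) ^ 2 + f₁ (z + c) ^ 2 =
        Complex.exp (L₁ z + L₂ z + H₁ z.2 + H₂ z.2 + B₂ + B₄) := by
  intro z
  have hs₁ : (fun t => f₁ (t, z.2)) = fun t =>
      (-(1/(2*I)) * Complex.exp (a₁₂ * z.2 + H₁ z.2 - L₁ c + B₂)) * Complex.exp (a₁₁ * t)
      + ((1/(2*I)) * Complex.exp (a₂₂ * z.2 + H₂ z.2 - L₂ c + B₄)) * Complex.exp (a₂₁ * t) := by
    funext t
    simp only [hf₁, hL₁, hL₂, Complex.exp_add, Complex.exp_sub]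
    ring
  have hs₂ : (fun t => f₂ (t, z.2)) = fun t =>
      ((1/(2*I)) * Complex.exp (a₁₂ * z.2 + H₁ z.2 - L₁ c + B₁)) * Complex.exp (a₁₁ * t)
      + (-(1/(2*I)) * Complex.exp (a₂₂ * z.2 + H₂ z.2 - L₂ c + B₃)) * Complex.exp (a₂₁ * t) := by
    funext t
    simp only [hf₂, hL₁, hL₂, Complex.exp_add, Complex.exp_sub]
    ring
  have hshift2 : (z + c).2 = z.2 + c.2 := rfl
  have hshift1 : (z + c).1 = z.1 + c.1 := rfl
  have hf₂c : f₂ (z + c) = (1/(2*I)) * (Complex.exp (L₁ z + H₁ z.2 + B₁)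
      - Complex.exp (L₂ z + H₂ z.2 + B₃)) := by
    rw [hf₂, hL₁ (z + c), hL₂ (z + c), hshift1, hshift2, hH₁per, hH₂per,
      hL₁ c, hL₂ c, hL₁ z, hL₂ z]
    rw [show a₁₁ * (z.1 + c.1) + a₁₂ * (z.2 + c.2) + H₁ z.2 - (a₁₁ * c.1 + a₁₂ * c.2) + B₁
        = a₁₁ * z.1 + a₁₂ * z.2 + H₁ z.2 + B₁ from by ring,
      show a₂₁ * (z.1 + c.1) + a₂₂ * (z.2 + c.2) + H₂ z.2 - (a₂₁ * c.1 + a₂₂ * c.2) + B₃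
        = a₂₁ * z.1 + a₂₂ * z.2 + H₂ z.2 + B₃ from by ring]
  have hf₁c : f₁ (z + c) = -((1/(2*I)) * (Complex.exp (L₁ z + H₁ z.2 + B₂)
      - Complex.exp (L₂ z + H₂ z.2 + B₄))) := by
    rw [hf₁, hL₁ (z + c), hL₂ (z + c), hshift1, hshift2, hH₁per, hH₂per,
      hL₁ c, hL₂ c, hL₁ z, hL₂ z]
    rw [show a₁₁ * (z.1 + c.1) + a₁₂ * (z.2 + c.2) + H₁ z.2 - (a₁₁ * c.1 + a₁₂ * c.2) + B₂
        = a₁₁ * z.1 + a₁₂ * z.2 + H₁ z.2 + B₂ from by ring,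
      show a₂₁ * (z.1 + c.1) + a₂₂ * (z.2 + c.2) + H₂ z.2 - (a₂₁ * c.1 + a₂₂ * c.2) + B₄
        = a₂₁ * z.1 + a₂₂ * z.2 + H₂ z.2 + B₄ from by ring]
  have hb₁ : Complex.exp B₁ = Complex.exp (B₁ - B₂) * Complex.exp B₂ := by
    rw [← Complex.exp_add]; congr 1; ring
  have hb₃ : Complex.exp B₃ = Complex.exp (B₃ - B₄) * Complex.exp B₄ := by
    rw [← Complex.exp_add]; congr 1; ring
  rcases hcases with ⟨h1, h2, h3, h4⟩ | ⟨h1, h2, h3, h4⟩ | ⟨h1, h2, h3, h4⟩ | ⟨h1, h2, h3, h4⟩ <;>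
    rw [h3] at hb₁ <;> rw [h4] at hb₃
  · have h1' : a₁₁ ^ k = Complex.exp (L₁ c) := h1.symm
    have h2' : a₂₁ ^ k = Complex.exp (L₂ c) := h2.symm
    have key₁ : iteratedDeriv k (fun t => f₁ (t, z.2)) z.1
        = -(1/(2*I)) * (Complex.exp (L₁ z + H₁ z.2 + B₂) - Complex.exp (L₂ z + H₂ z.2 + B₄)) := by
      rw [hs₁, expDeriv_aux, h1', h2']
      simp only [hL₁, hL₂, Complex.exp_add, Complex.exp_sub]
      field_simp
      ring
    have key₂ : iteratedDeriv k (fun t => f₂ (t, z.2)) z.1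
        = (1/(2*I)) * (Complex.exp (L₁ z + H₁ z.2 + B₁) - Complex.exp (L₂ z + H₂ z.2 + B₃)) := by
      rw [hs₂, expDeriv_aux, h1', h2']
      simp only [hL₁, hL₂, Complex.exp_add, Complex.exp_sub]
      field_simp
      ring
    constructor
    · rw [key₁, hf₂c]
      simp only [Complex.exp_add]
      rw [hb₁, hb₃, hdivI_aux]
      linear_combination (I^2*((Complex.exp (L₁ z) * Complex.exp (H₁ z.2))*(Complex.exp (L₂ z) * Complex.exp (H₂ z.2))*Complex.exp B₂*Complex.exp B₄/2 + (Complex.exp (L₁ z) * Complex.exp (H₁ z.2))^2*Complex.exp B₂^2/4 + (Complex.exp (L₂ z) * Complex.exp (H₂ z.2))^2*Complex.exp B₄^2/4)) * Complex.I_sq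
    · rw [key₂, hf₁c]
      simp only [Complex.exp_add]
      rw [hb₁, hb₃, hdivI_aux]
      linear_combination (I^2*((Complex.exp (L₁ z) * Complex.exp (H₁ z.2))*(Complex.exp (L₂ z) * Complex.exp (H₂ z.2))*Complex.exp B₂*Complex.exp B₄/2 + (Complex.exp (L₁ z) * Complex.exp (H₁ z.2))^2*Complex.exp B₂^2/4 + (Complex.exp (L₂ z) * Complex.exp (H₂ z.2))^2*Complex.exp B₄^2/4) - (Complex.exp (L₁ z) * Complex.exp (H₁ z.2))*(Complex.exp (L₂ z) * Complex.exp (H₂ z.2))*Complex.exp B₂*Complex.exp B₄) * Complex.I_sq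
  · have h1' : a₁₁ ^ k = Complex.exp (L₁ c) := h1.symm
    have h2' : a₂₁ ^ k = -Complex.exp (L₂ c) := by linear_combination h2
    have key₁ : iteratedDeriv k (fun t => f₁ (t, z.2)) z.1
        = -(1/(2*I)) * (Complex.exp (L₁ z + H₁ z.2 + B₂) + Complex.exp (L₂ z + H₂ z.2 + B₄)) := by
      rw [hs₁, expDeriv_aux, h1', h2']
      simp only [hL₁, hL₂, Complex.exp_add, Complex.exp_sub]
      field_simp
      ring
    have key₂ : iteratedDeriv k (fun t => f₂ (t, z.2)) z.1
        = (1/(2*I)) * (Complex.exp (L₁ z + H₁ z.2 + B₁) + Complex.exp (L₂ z + H₂ z.2 + B₃)) := by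
      rw [hs₂, expDeriv_aux, h1', h2']
      simp only [hL₁, hL₂, Complex.exp_add, Complex.exp_sub]
      field_simp
    constructor
    · rw [key₁, hf₂c]
      simp only [Complex.exp_add]
      rw [hb₁, hb₃, hdivI_aux]
      linear_combination (I^2*(-((Complex.exp (L₁ z) * Complex.exp (H₁ z.2))*(Complex.exp (L₂ z) * Complex.exp (H₂ z.2))*Complex.exp B₂*Complex.exp B₄)/2 + (Complex.exp (L₁ z) * Complex.exp (H₁ z.2))^2*Complex.exp B₂^2/4 + (Complex.exp (L₂ z) * Complex.exp (H₂ z.2))^2*Complex.exp B₄^2/4)) * Complex.I_sq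
    · rw [key₂, hf₁c]
      simp only [Complex.exp_add]
      rw [hb₁, hb₃, hdivI_aux]
      linear_combination (I^2*((Complex.exp (L₁ z) * Complex.exp (H₁ z.2))*(Complex.exp (L₂ z) * Complex.exp (H₂ z.2))*Complex.exp B₂*Complex.exp B₄/2 + (Complex.exp (L₁ z) * Complex.exp (H₁ z.2))^2*Complex.exp B₂^2/4 + (Complex.exp (L₂ z) * Complex.exp (H₂ z.2))^2*Complex.exp B₄^2/4) - (Complex.exp (L₁ z) * Complex.exp (H₁ z.2))*(Complex.exp (L₂ z) * Complex.exp (H₂ z.2))*Complex.exp B₂*Complex.exp B₄) * Complex.I_sq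
  · have h1' : a₁₁ ^ k = -Complex.exp (L₁ c) := by linear_combination h1
    have h2' : a₂₁ ^ k = Complex.exp (L₂ c) := h2.symm
    have key₁ : iteratedDeriv k (fun t => f₁ (t, z.2)) z.1
        = -(1/(2*I)) * (-Complex.exp (L₁ z + H₁ z.2 + B₂) - Complex.exp (L₂ z + H₂ z.2 + B₄)) := by
      rw [hs₁, expDeriv_aux, h1', h2']
      simp only [hL₁, hL₂, Complex.exp_add, Complex.exp_sub]
      field_simp
      ring
    have key₂ : iteratedDeriv k (fun t => f₂ (t, z.2)) z.1
        = (1/(2*I)) * (-Complex.exp (L₁ z + H₁ z.2 + B₁) - Complex.exp (L₂ z + H₂ z.2 + B₃)) := by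
      rw [hs₂, expDeriv_aux, h1', h2']
      simp only [hL₁, hL₂, Complex.exp_add, Complex.exp_sub]
      field_simp
      ring
    constructor
    · rw [key₁, hf₂c]
      simp only [Complex.exp_add]
      rw [hb₁, hb₃, hdivI_aux]
      linear_combination (I^2*(-((Complex.exp (L₁ z) * Complex.exp (H₁ z.2))*(Complex.exp (L₂ z) * Complex.exp (H₂ z.2))*Complex.exp B₂*Complex.exp B₄)/2 + (Complex.exp (L₁ z) * Complex.exp (H₁ z.2))^2*Complex.exp B₂^2/4 + (Complex.exp (L₂ z) * Complex.exp (H₂ z.2))^2*Complex.exp B₄^2/4)) * Complex.I_sq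
    · rw [key₂, hf₁c]
      simp only [Complex.exp_add]
      rw [hb₁, hb₃, hdivI_aux]
      linear_combination (I^2*((Complex.exp (L₁ z) * Complex.exp (H₁ z.2))*(Complex.exp (L₂ z) * Complex.exp (H₂ z.2))*Complex.exp B₂*Complex.exp B₄/2 + (Complex.exp (L₁ z) * Complex.exp (H₁ z.2))^2*Complex.exp B₂^2/4 + (Complex.exp (L₂ z) * Complex.exp (H₂ z.2))^2*Complex.exp B₄^2/4) - (Complex.exp (L₁ z) * Complex.exp (H₁ z.2))*(Complex.exp (L₂ z) * Complex.exp (H₂ z.2))*Complex.exp B₂*Complex.exp B₄) * Complex.I_sq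
  · have h1' : a₁₁ ^ k = -Complex.exp (L₁ c) := by linear_combination h1
    have h2' : a₂₁ ^ k = -Complex.exp (L₂ c) := by linear_combination h2
    have key₁ : iteratedDeriv k (fun t => f₁ (t, z.2)) z.1
        = -(1/(2*I)) * (-Complex.exp (L₁ z + H₁ z.2 + B₂) + Complex.exp (L₂ z + H₂ z.2 + B₄)) := by
      rw [hs₁, expDeriv_aux, h1', h2']
      simp only [hL₁, hL₂, Complex.exp_add, Complex.exp_sub]
      field_simp
      ring
    have key₂ : iteratedDeriv k (fun t => f₂ (t, z.2)) z.1
        = (1/(2*I)) * (-Complex.exp (L₁ z + H₁ z.2 + B₁) + Complex.exp (L₂ z + H₂ z.2 + B₃)) := by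
      rw [hs₂, expDeriv_aux, h1', h2']
      simp only [hL₁, hL₂, Complex.exp_add, Complex.exp_sub]
      field_simp
    constructor
    · rw [key₁, hf₂c]
      simp only [Complex.exp_add]
      rw [hb₁, hb₃, hdivI_aux]
      linear_combination (I^2*((Complex.exp (L₁ z) * Complex.exp (H₁ z.2))*(Complex.exp (L₂ z) * Complex.exp (H₂ z.2))*Complex.exp B₂*Complex.exp B₄/2 + (Complex.exp (L₁ z) * Complex.exp (H₁ z.2))^2*Complex.exp B₂^2/4 + (Complex.exp (L₂ z) * Complex.exp (H₂ z.2))^2*Complex.exp B₄^2/4)) * Complex.I_sq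
    · rw [key₂, hf₁c]
      simp only [Complex.exp_add]
      rw [hb₁, hb₃, hdivI_aux]
      linear_combination (I^2*((Complex.exp (L₁ z) * Complex.exp (H₁ z.2))*(Complex.exp (L₂ z) * Complex.exp (H₂ z.2))*Complex.exp B₂*Complex.exp B₄/2 + (Complex.exp (L₁ z) * Complex.exp (H₁ z.2))^2*Complex.exp B₂^2/4 + (Complex.exp (L₂ z) * Complex.exp (H₂ z.2))^2*Complex.exp B₄^2/4) - (Complex.exp (L₁ z) * Complex.exp (H₁ z.2))*(Complex.exp (L₂ z) * Complex.exp (H₂ z.2))*Complex.exp B₂*Complex.exp B₄) * Complex.I_sq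
end

section
/- (Verification direction of Theorem 3, conclusion (i).) Let c = (c₁, c₂) ∈ ℂ², let k be an odd positive integer, let α₁, α₂, β, η ∈ ℂ with α₁ ≠ 0, let H : ℂ → ℂ be a one-variable polynomial function with H(z₂ + c₂) = H(z₂) for all z₂, set L(z) = α₁z₁ + α₂z₂ and P(z) = L(z) + H(z₂) + β, and assume exp(2η) = 1, α₁ᵏ = −2i·exp(−η), and exp(L(c)) = i·exp(η)/(α₁ᵏ + i·exp(η)). Define f₁(z) = (e^{P(z)} − e^{−P(z)})/(2α₁ᵏ) and f₂(z) = (e^{P(z)+η} − e^{−(P(z)+η)})/(2α₁ᵏ). Then for all z ∈ ℂ²: (∂ᵏf₁/∂z₁ᵏ)(z)² + (f₂(z + c) − f₂(z))² = 1 and (∂ᵏf₂/∂z₁ᵏ)(z)² + (f₁(z + c) − f₁(z))² = 1. -/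
open Complex

lemma exp_iter (b d₁ d₂ : ℂ) (n : ℕ) : ∀ (C₁ C₂ x : ℂ),
    iteratedDeriv n (fun t => C₁ * Complex.exp (b*t + d₁) + C₂ * Complex.exp (-(b*t) + d₂)) x
      = b^n * C₁ * Complex.exp (b*x + d₁) + (-b)^n * C₂ * Complex.exp (-(b*x) + d₂) := by
  induction n with
  | zero => intro C₁ C₂ x; simp
  | succ n ih =>
    intro C₁ C₂ x
    rw [iteratedDeriv_succ']
    have hderiv : (deriv fun t => C₁ * Complex.exp (b*t + d₁) + C₂ * Complex.exp (-(b*t) + d₂))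
        = fun t => (b*C₁) * Complex.exp (b*t + d₁) + (-b*C₂) * Complex.exp (-(b*t) + d₂) := by
      funext t
      have h1 : HasDerivAt (fun t : ℂ => b*t + d₁) b t := by
        simpa using ((hasDerivAt_id t).const_mul b).add_const d₁
      have h2 : HasDerivAt (fun t : ℂ => -(b*t) + d₂) (-b) t := by
        simpa using (((hasDerivAt_id t).const_mul b).neg).add_const d₂
      have := ((h1.cexp.const_mul C₁).add (h2.cexp.const_mul C₂)).deriv
      exact this.trans (by ring)
    rw [hderiv, ih]
    ring

/-- Verification direction of Theorem 3, conclusion (i) (k odd). -/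
theorem stmt_13 (c : ℂ × ℂ) (k : ℕ) (hk : 0 < k) (hkodd : Odd k)
    (α₁ α₂ β η : ℂ) (hα₁ : α₁ ≠ 0)
    (H : ℂ → ℂ) (hHpoly : ∃ h : Polynomial ℂ, ∀ t, H t = Polynomial.eval t h)
    (hHper : ∀ t : ℂ, H (t + c.2) = H t)
    (L P : ℂ × ℂ → ℂ)
    (hL : ∀ z : ℂ × ℂ, L z = α₁ * z.1 + α₂ * z.2)
    (hP : ∀ z : ℂ × ℂ, P z = L z + H z.2 + β)
    (hη : Complex.exp (2 * η) = 1)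
    (hα₁k : α₁ ^ k = -2 * I * Complex.exp (-η))
    (hLc : Complex.exp (L c) = I * Complex.exp η / (α₁ ^ k + I * Complex.exp η))
    (f₁ f₂ : ℂ × ℂ → ℂ)
    (hf₁ : ∀ z : ℂ × ℂ, f₁ z =
      (Complex.exp (P z) - Complex.exp (-P z)) / (2 * α₁ ^ k))
    (hf₂ : ∀ z : ℂ × ℂ, f₂ z =
      (Complex.exp (P z + η) - Complex.exp (-(P z + η))) / (2 * α₁ ^ k)) :
    ∀ z : ℂ × ℂ,
      (iteratedDeriv k (fun t => f₁ (t, z.2)) z.1) ^ 2 + (f₂ (z + c) - f₂ z) ^ 2 = 1 ∧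
      (iteratedDeriv k (fun t => f₂ (t, z.2)) z.1) ^ 2 + (f₁ (z + c) - f₁ z) ^ 2 = 1 := by
  intro z
  set s : ℂ := Complex.exp η with hsdef
  have hs0 : s ≠ 0 := Complex.exp_ne_zero η
  have hs : s * s = 1 := by
    rw [hsdef, ← Complex.exp_add, ← hη]; ring_nf
  have hmη : Complex.exp (-η) = s := by
    rw [Complex.exp_neg, ← hsdef]
    exact inv_eq_of_mul_eq_one_right hs
  have ha : α₁ ^ k = -2 * I * s := by rw [hα₁k, hmη]
  have ha0 : α₁ ^ k ≠ 0 := pow_ne_zero _ hα₁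
  have hI2 : (I : ℂ) ^ 2 = -1 := Complex.I_sq
  have hlam : Complex.exp (L c) = -1 := by
    rw [hLc, ha]
    have hden : -2 * I * s + I * s = -(I * s) := by ring
    rw [hden, div_neg, div_self (by simp [Complex.I_ne_zero, hs0] : (I : ℂ) * s ≠ 0)]
  have hmlam : Complex.exp (-(L c)) = -1 := by
    rw [Complex.exp_neg, hlam]; norm_num
  -- abbreviations for this z
  set A : ℂ := α₂ * z.2 + H z.2 + β with hA
  have hPz : ∀ t : ℂ, P (t, z.2) = α₁ * t + A := by
    intro t; rw [hP, hL]
    show α₁ * t + α₂ * z.2 + H z.2 + β = α₁ * t + A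
    rw [hA]; ring
  have hPzz : P z = α₁ * z.1 + A := by
    have := hPz z.1; simpa using this
  set u : ℂ := Complex.exp (P z) with hu
  set v : ℂ := Complex.exp (-(P z)) with hv
  have hu0 : u ≠ 0 := Complex.exp_ne_zero _
  have huv : u * v = 1 := by
    rw [hu, hv, ← Complex.exp_add]; simp
  have hPc : P (z + c) = P z + L c := by
    simp only [hP, hL, Prod.fst_add, Prod.snd_add, hHper]
    ring
  -- exponential values
  have e1 : Complex.exp (P (z + c)) = -u := by
    rw [hPc, Complex.exp_add, hlam, hu]; ring
  have e2 : Complex.exp (-(P (z + c))) = -v := by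
    rw [hPc, neg_add, Complex.exp_add, hmlam, hv]; ring
  have e3 : Complex.exp (P z + η) = u * s := by
    rw [Complex.exp_add, hu, hsdef]
  have e4 : Complex.exp (-(P z + η)) = v * s := by
    rw [neg_add, Complex.exp_add, hv, hmη]
  have e5 : Complex.exp (P (z + c) + η) = -(u * s) := by
    rw [Complex.exp_add, e1, ← hsdef]; ring
  have e6 : Complex.exp (-(P (z + c) + η)) = -(v * s) := by
    rw [neg_add, Complex.exp_add, e2, hmη]; ring
  -- difference values
  have hdiff2 : f₂ (z + c) - f₂ z = I * (v - u) / 2 := by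
    rw [hf₂, hf₂, e3, e4, e5, e6, ha, div_sub_div_same,
      div_eq_iff (by simp [Complex.I_ne_zero, hs0] : 2 * (-2 * I * s) ≠ 0)]
    linear_combination (2 * s * (v - u)) * hI2
  have hdiff1 : f₁ (z + c) - f₁ z = I * s * (v - u) / 2 := by
    rw [hf₁, hf₁, e1, e2, ← hu, ← hv, ha, div_sub_div_same,
      div_eq_iff (by simp [Complex.I_ne_zero, hs0] : 2 * (-2 * I * s) ≠ 0)]
    linear_combination (2 * (v - u) * s * s) * hI2 + (-(2 * (v - u))) * hs
  -- iterated derivatives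
  have hneg : (-α₁) ^ k = -(α₁ ^ k) := Odd.neg_pow hkodd α₁
  have hfun1 : (fun t => f₁ (t, z.2)) =
      fun t => (2 * α₁ ^ k)⁻¹ * Complex.exp (α₁ * t + A)
        + (-(2 * α₁ ^ k)⁻¹) * Complex.exp (-(α₁ * t) + (-A)) := by
    funext t
    rw [hf₁, hPz]
    have hh : -(α₁ * t + A) = -(α₁ * t) + -A := by ring
    rw [hh]
    ring
  have hfun2 : (fun t => f₂ (t, z.2)) =
      fun t => (2 * α₁ ^ k)⁻¹ * Complex.exp (α₁ * t + (A + η))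
        + (-(2 * α₁ ^ k)⁻¹) * Complex.exp (-(α₁ * t) + (-(A + η))) := by
    funext t
    rw [hf₂, hPz]
    have h1 : α₁ * t + A + η = α₁ * t + (A + η) := by ring
    rw [h1]
    have h2 : -(α₁ * t + (A + η)) = -(α₁ * t) + -(A + η) := by ring
    rw [h2]
    ring
  have hd1 : iteratedDeriv k (fun t => f₁ (t, z.2)) z.1 = (u + v) / 2 := by
    rw [hfun1, exp_iter, hneg, hu, hv, hPzz]
    have hh : -(α₁ * z.1 + A) = -(α₁ * z.1) + -A := by ring
    rw [hh]
    field_simp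
  have hd2 : iteratedDeriv k (fun t => f₂ (t, z.2)) z.1 = (u * s + v * s) / 2 := by
    rw [hfun2, exp_iter, hneg]
    have h1 : α₁ * z.1 + (A + η) = P z + η := by rw [hPzz]; ring
    have h2 : -(α₁ * z.1) + -(A + η) = -(P z + η) := by rw [hPzz]; ring
    rw [h1, h2, e3, e4]
    field_simp
  constructor
  · rw [hd1, hdiff2]
    linear_combination huv + ((v - u)^2 / 4) * hI2
  · rw [hd2, hdiff1]
    linear_combination (s * s) * huv + hs + (s * s * (v - u)^2 / 4) * hI2
end

section
/- (Verification direction of Theorem 3, conclusion (ii).) Let c = (c₁, c₂) ∈ ℂ², let k be an even positive integer, let α₁, α₂, β, η ∈ ℂ with α₁ ≠ 0, let H : ℂ → ℂ be a one-variable polynomial function with H(z₂ + c₂) = H(z₂) for all z₂, set L(z) = α₁z₁ + α₂z₂ and P(z) = L(z) + H(z₂) + β, and assume exp(2η) = −1, α₁ᵏ = 2i·exp(η), and exp(L(c)) = 1 + i·exp(−η)·α₁ᵏ. Define f₁(z) = (e^{P(z)} + e^{−P(z)})/(2α₁ᵏ) and f₂(z) = (e^{−P(z)+η} + e^{P(z)−η})/(2α₁ᵏ).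 Then for all z ∈ ℂ²: (∂ᵏf₁/∂z₁ᵏ)(z)² + (f₂(z + c) − f₂(z))² = 1 and (∂ᵏf₂/∂z₁ᵏ)(z)² + (f₁(z + c) − f₁(z))² = 1. -/
open Complex

lemma iter_two_exp (a₁ b₁ a₂ b₂ C : ℂ) : ∀ (k : ℕ) (x : ℂ),
    iteratedDeriv k (fun t => (Complex.exp (a₁*t+b₁) + Complex.exp (a₂*t+b₂))/C) x
      = (a₁^k * Complex.exp (a₁*x+b₁) + a₂^k * Complex.exp (a₂*x+b₂))/C := by
  intro k
  induction k with
  | zero => intro x; simp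
  | succ n ih =>
    intro x
    rw [iteratedDeriv_succ, funext ih]
    have h : HasDerivAt (fun x => (a₁^n * Complex.exp (a₁*x+b₁) + a₂^n * Complex.exp (a₂*x+b₂))/C)
        ((a₁^n * (Complex.exp (a₁*x+b₁) * (a₁*1)) + a₂^n * (Complex.exp (a₂*x+b₂) * (a₂*1)))/C) x := by
      exact (((((hasDerivAt_id x).const_mul a₁).add_const b₁).cexp.const_mul (a₁^n)).add
        ((((hasDerivAt_id x).const_mul a₂).add_const b₂).cexp.const_mul (a₂^n))).div_const C
    rw [h.deriv]
    ring


/-- Verification direction of Theorem 3, conclusion (ii) (k even). -/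
theorem stmt_14 (c : ℂ × ℂ) (k : ℕ) (hk : 0 < k) (hkeven : Even k)
    (α₁ α₂ β η : ℂ) (hα₁ : α₁ ≠ 0)
    (H : ℂ → ℂ) (hHpoly : ∃ h : Polynomial ℂ, ∀ t, H t = Polynomial.eval t h)
    (hHper : ∀ t : ℂ, H (t + c.2) = H t)
    (L P : ℂ × ℂ → ℂ)
    (hL : ∀ z : ℂ × ℂ, L z = α₁ * z.1 + α₂ * z.2)
    (hP : ∀ z : ℂ × ℂ, P z = L z + H z.2 + β)
    (hη : Complex.exp (2 * η) = -1)
    (hα₁k : α₁ ^ k = 2 * I * Complex.exp η)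
    (hLc : Complex.exp (L c) = 1 + I * Complex.exp (-η) * α₁ ^ k)
    (f₁ f₂ : ℂ × ℂ → ℂ)
    (hf₁ : ∀ z : ℂ × ℂ, f₁ z =
      (Complex.exp (P z) + Complex.exp (-P z)) / (2 * α₁ ^ k))
    (hf₂ : ∀ z : ℂ × ℂ, f₂ z =
      (Complex.exp (-P z + η) + Complex.exp (P z - η)) / (2 * α₁ ^ k)) :
    ∀ z : ℂ × ℂ,
      (iteratedDeriv k (fun t => f₁ (t, z.2)) z.1) ^ 2 + (f₂ (z + c) - f₂ z) ^ 2 = 1 ∧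
      (iteratedDeriv k (fun t => f₂ (t, z.2)) z.1) ^ 2 + (f₁ (z + c) - f₁ z) ^ 2 = 1 := by
  intro z
  have hak : α₁ ^ k ≠ 0 := pow_ne_zero _ hα₁
  set u := Complex.exp (P z) with hu_def
  set v := Complex.exp η with hv_def
  have hu : u ≠ 0 := Complex.exp_ne_zero _
  have hv : v ≠ 0 := Complex.exp_ne_zero _
  have hv2 : v * v = -1 := by
    rw [hv_def, ← Complex.exp_add, ← two_mul]; exact hη
  have hI2 : I * I = (-1 : ℂ) := Complex.I_mul_I
  -- exp (L c) = -1
  have heLc : Complex.exp (L c) = -1 := by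
    rw [hLc, hα₁k, Complex.exp_neg, ← hv_def]
    field_simp [hu, hv, Complex.I_ne_zero]
    linear_combination 2 * hI2
  -- P (z + c) = P z + L c
  have hPc : P (z + c) = P z + L c := by
    simp only [hP, hL, Prod.fst_add, Prod.snd_add, hHper]
    ring
  set B := α₂ * z.2 + H z.2 + β with hB
  have hPz : P z = α₁ * z.1 + B := by rw [hP, hL, hB]; ring
  -- derivative of f₁ slice
  have e₁ : (fun t => f₁ (t, z.2)) = fun t =>
      (Complex.exp (α₁*t + B) + Complex.exp ((-α₁)*t + (-B)))/(2*α₁^k) := by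
    funext t
    rw [hf₁]
    have hPt : P (t, z.2) = α₁ * t + B := by rw [hP, hL, hB]; ring
    rw [hPt]
    ring_nf
  have hd1 : iteratedDeriv k (fun t => f₁ (t, z.2)) z.1 = (u + u⁻¹)/2 := by
    rw [e₁, iter_two_exp, hkeven.neg_pow]
    rw [show α₁*z.1 + B = P z from hPz.symm,
        show (-α₁)*z.1 + (-B) = -(P z) from by rw [hPz]; ring,
        Complex.exp_neg, ← hu_def]
    field_simp [hu, hv, Complex.I_ne_zero]
  -- derivative of f₂ slice
  have e₂ : (fun t => f₂ (t, z.2)) = fun t =>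
      (Complex.exp ((-α₁)*t + (η - B)) + Complex.exp (α₁*t + (B - η)))/(2*α₁^k) := by
    funext t
    rw [hf₂]
    have hPt : P (t, z.2) = α₁ * t + B := by rw [hP, hL, hB]; ring
    rw [hPt]
    ring_nf
  have hd2 : iteratedDeriv k (fun t => f₂ (t, z.2)) z.1 = (u⁻¹ * v + u * v⁻¹)/2 := by
    rw [e₂, iter_two_exp, hkeven.neg_pow]
    rw [show (-α₁)*z.1 + (η - B) = -(P z) + η from by rw [hPz]; ring,
        show α₁*z.1 + (B - η) = P z - η from by rw [hPz]; ring,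
        Complex.exp_add, Complex.exp_neg, sub_eq_add_neg, Complex.exp_add,
        Complex.exp_neg, ← hu_def, ← hv_def]
    field_simp [hu, hv, Complex.I_ne_zero]
  -- difference terms
  have hD2 : f₂ (z + c) - f₂ z = (-(u⁻¹ * v) - u * v⁻¹ - (u⁻¹ * v + u * v⁻¹))/(2*α₁^k) := by
    rw [hf₂, hf₂, hPc]
    simp only [neg_add, sub_eq_add_neg, Complex.exp_add, Complex.exp_neg, heLc, ← hu_def, ← hv_def]
    ring
  have hD1 : f₁ (z + c) - f₁ z = (-u - u⁻¹ - (u + u⁻¹))/(2*α₁^k) := by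
    rw [hf₁, hf₁, hPc]
    simp only [neg_add, Complex.exp_add, Complex.exp_neg, heLc, ← hu_def]
    ring
  constructor
  · rw [hd1, hD2, hα₁k]
    field_simp [hu, hv, Complex.I_ne_zero]
    have hD : (u * v * (2 * (2 * Complex.I * v))) ^ 2 ≠ 0 := by
      apply pow_ne_zero
      exact mul_ne_zero (mul_ne_zero hu hv)
        (mul_ne_zero two_ne_zero (mul_ne_zero (mul_ne_zero two_ne_zero Complex.I_ne_zero) hv))
    linear_combination (4*u^2*(2*v^2+u^2-u^2*v^2)) * hv2 + (4*v^4*(u^2-1)^2) * hI2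
  · rw [hd2, hD1, hα₁k]
    field_simp [hu, hv, Complex.I_ne_zero]
    have hD : (u * (2 * (2 * Complex.I * v))) ^ 2 ≠ 0 := by
      apply pow_ne_zero
      exact mul_ne_zero hu
        (mul_ne_zero two_ne_zero (mul_ne_zero (mul_ne_zero two_ne_zero Complex.I_ne_zero) hv))
    linear_combination (4*(2*u^2+1-v^2)) * hv2 + (4*(v^2-u^2)^2) * hI2
end

section
/- (Example 1, instantiating Theorem 1(i).) Let c = (c₁, c₂) ∈ ℂ² satisfy exp(c₁ + 2c₂) = −9/25, and let B₁, B₂ ∈ ℂ with B₁ − B₂ = 2πi. Define Φ(z₁, z₂) = (c₂z₁ − c₁z₂)³, f₁(z₁, z₂) = (5/4)·exp((z₁ + 2z₂ + Φ(z₁, z₂) + B₁)/2) and f₂(z₁, z₂) = (5/4)·exp((z₁ + 2z₂ + Φ(z₁, z₂) + B₂)/2). Then for all z = (z₁, z₂) ∈ ℂ²: f₁(z)² + f₂(z + c)² = exp(z₁ + 2z₂ + Φ(z) + B₁) and f₂(z)² + f₁(z + c)² = exp(z₁ + 2z₂ + Φ(z) + B₂). -/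
open Complex

/-- Example 1, instantiating Theorem 1(i). -/
theorem stmt_15 (c : ℂ × ℂ) (hc : Complex.exp (c.1 + 2 * c.2) = -9 / 25)
    (B₁ B₂ : ℂ) (hB : B₁ - B₂ = 2 * (Real.pi : ℂ) * I)
    (Φ f₁ f₂ : ℂ × ℂ → ℂ)
    (hΦ : ∀ z : ℂ × ℂ, Φ z = (c.2 * z.1 - c.1 * z.2) ^ 3)
    (hf₁ : ∀ z : ℂ × ℂ, f₁ z = (5 / 4) * Complex.exp ((z.1 + 2 * z.2 + Φ z + B₁) / 2))
    (hf₂ : ∀ z : ℂ × ℂ, f₂ z = (5 / 4) * Complex.exp ((z.1 + 2 * z.2 + Φ z + B₂) / 2)) :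
    ∀ z : ℂ × ℂ,
      f₁ z ^ 2 + f₂ (z + c) ^ 2 = Complex.exp (z.1 + 2 * z.2 + Φ z + B₁) ∧
      f₂ z ^ 2 + f₁ (z + c) ^ 2 = Complex.exp (z.1 + 2 * z.2 + Φ z + B₂) := by
  have hBeq : Complex.exp B₁ = Complex.exp B₂ := by
    have h1 : B₁ = B₂ + 2 * (Real.pi : ℂ) * I := by linear_combination hB
    rw [h1, Complex.exp_add, Complex.exp_two_pi_mul_I, mul_one]
  have key : ∀ w : ℂ, ((5 / 4 : ℂ) * Complex.exp (w / 2)) ^ 2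
      = 25 / 16 * Complex.exp w := by
    intro w
    have : Complex.exp (w / 2) ^ 2 = Complex.exp w := by
      rw [sq, ← Complex.exp_add]; ring_nf
    rw [mul_pow, this]; norm_num
  intro z
  have hΦc : Φ (z + c) = Φ z := by
    rw [hΦ, hΦ]
    simp only [Prod.fst_add, Prod.snd_add]
    ring
  have h1 : (z + c).1 = z.1 + c.1 := rfl
  have h2 : (z + c).2 = z.2 + c.2 := rfl
  have h4 : ∀ B : ℂ, Complex.exp (z.1 + c.1 + 2 * (z.2 + c.2) + Φ z + B)
      = Complex.exp (z.1 + 2 * z.2 + Φ z) * Complex.exp B * (-9 / 25) := by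
    intro B
    rw [show z.1 + c.1 + 2 * (z.2 + c.2) + Φ z + B
        = (z.1 + 2 * z.2 + Φ z) + B + (c.1 + 2 * c.2) from by ring,
      Complex.exp_add, Complex.exp_add, hc]
  have h5 : ∀ B : ℂ, Complex.exp (z.1 + 2 * z.2 + Φ z + B)
      = Complex.exp (z.1 + 2 * z.2 + Φ z) * Complex.exp B := fun B => Complex.exp_add _ B
  constructor
  · rw [hf₁, hf₂, key, key, hΦc, h1, h2, h4, h5, ← hBeq]
    ring
  · rw [hf₁, hf₂, key, key, hΦc, h1, h2, h4, h5, hBeq]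
    ring
end

section
/- (Example 4, instantiating Theorem 2(ii) with k = 2.) Let c = (c₁, c₂) = (2·log 2, πi/2 − 2·log 2) ∈ ℂ² (log 2 the real logarithm of 2). Define f₁(z₁, z₂) = (1/8)(4e^{z₁+z₂} − e^{2z₁+z₂}) and f₂(z₁, z₂) = −(1/8)(4e^{z₁+z₂} + e^{2z₁+z₂}). Then for all z = (z₁, z₂) ∈ ℂ²: (∂²f₁/∂z₁²)(z)² + f₂(z + c)² = −exp(3z₁ + 2z₂) (i.e., e^{3z₁+2z₂+3πi}) and (∂²f₂/∂z₁²)(z)² + f₁(z + c)² = exp(3z₁ + 2z₂) (i.e., e^{3z₁+2z₂+2πi}). -/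
open Complex

lemma hd1 (w t : ℂ) : HasDerivAt (fun t : ℂ => Complex.exp (t + w)) (Complex.exp (t + w)) t := by
  simpa using ((hasDerivAt_id t).add_const w).cexp

lemma hd2 (w t : ℂ) : HasDerivAt (fun t : ℂ => Complex.exp (2*t + w)) (2 * Complex.exp (2*t + w)) t := by
  have := (((hasDerivAt_id t).const_mul 2).add_const w).cexp
  simpa [mul_comm] using this

lemma dcombo (w a b : ℂ) :
    deriv (fun t : ℂ => a * Complex.exp (t + w) + b * Complex.exp (2*t + w)) =
    fun t => a * Complex.exp (t + w) + (2*b) * Complex.exp (2*t + w) := by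
  funext t
  have := ((hd1 w t).const_mul a).add ((hd2 w t).const_mul b)
  rw [HasDerivAt.deriv (f := fun t : ℂ => a * Complex.exp (t + w) + b * Complex.exp (2*t + w)) this]; ring

lemma d2combo (w a b : ℂ) :
    iteratedDeriv 2 (fun t : ℂ => a * Complex.exp (t + w) + b * Complex.exp (2*t + w)) =
    fun t => a * Complex.exp (t + w) + (4*b) * Complex.exp (2*t + w) := by
  rw [iteratedDeriv_succ, iteratedDeriv_one, dcombo, dcombo]
  funext t; ring

/-- Example 4, instantiating Theorem 2(ii) with k = 2. -/
theorem stmt_17 (c : ℂ × ℂ)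
    (hc : c = (2 * (Real.log 2 : ℂ), (Real.pi : ℂ) * I / 2 - 2 * (Real.log 2 : ℂ)))
    (f₁ f₂ : ℂ × ℂ → ℂ)
    (hf₁ : ∀ z : ℂ × ℂ, f₁ z = (1 / 8) *
      (4 * Complex.exp (z.1 + z.2) - Complex.exp (2 * z.1 + z.2)))
    (hf₂ : ∀ z : ℂ × ℂ, f₂ z = -((1 / 8) *
      (4 * Complex.exp (z.1 + z.2) + Complex.exp (2 * z.1 + z.2)))) :
    ∀ z : ℂ × ℂ,
      (iteratedDeriv 2 (fun t => f₁ (t, z.2)) z.1) ^ 2 + f₂ (z + c) ^ 2 =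
        -Complex.exp (3 * z.1 + 2 * z.2) ∧
      (iteratedDeriv 2 (fun t => f₂ (t, z.2)) z.1) ^ 2 + f₁ (z + c) ^ 2 =
        Complex.exp (3 * z.1 + 2 * z.2) := by
  intro z
  have hI : Complex.exp ((Real.pi : ℂ) * I / 2) = I := by
    rw [show (Real.pi : ℂ) * I / 2 = ((Real.pi/2 : ℝ) : ℂ) * I by push_cast; ring,
      Complex.exp_mul_I]
    simp
  have hL : Complex.exp (2 * (Real.log 2 : ℂ)) = 4 := by
    rw [show (2 * (Real.log 2 : ℂ)) = ((2 * Real.log 2 : ℝ) : ℂ) by push_cast; ring,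
      ← Complex.ofReal_exp, two_mul, Real.exp_add, Real.exp_log (by norm_num)]
    norm_num
  have e1 : (fun t : ℂ => f₁ (t, z.2)) =
      fun t => (1/2 : ℂ) * Complex.exp (t + z.2) + (-1/8 : ℂ) * Complex.exp (2*t + z.2) := by
    funext t; simp only [hf₁]; ring
  have e2 : (fun t : ℂ => f₂ (t, z.2)) =
      fun t => (-1/2 : ℂ) * Complex.exp (t + z.2) + (-1/8 : ℂ) * Complex.exp (2*t + z.2) := by
    funext t; simp only [hf₂]; ring
  have hA1 : Complex.exp ((z + c).1 + (z + c).2) = Complex.exp (z.1 + z.2) * I := by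
    rw [hc, show (z + ((2 * (Real.log 2 : ℂ), (Real.pi : ℂ) * I / 2 - 2 * (Real.log 2 : ℂ)) : ℂ × ℂ)).1
        + (z + ((2 * (Real.log 2 : ℂ), (Real.pi : ℂ) * I / 2 - 2 * (Real.log 2 : ℂ)) : ℂ × ℂ)).2
        = (z.1 + z.2) + (Real.pi : ℂ) * I / 2 from by simp [Prod.fst_add, Prod.snd_add]; ring,
      Complex.exp_add, hI]
  have hA2 : Complex.exp (2 * (z + c).1 + (z + c).2) = Complex.exp (2*z.1 + z.2) * (4*I) := by
    rw [hc, show 2 * (z + ((2 * (Real.log 2 : ℂ), (Real.pi : ℂ) * I / 2 - 2 * (Real.log 2 : ℂ)) : ℂ × ℂ)).1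
        + (z + ((2 * (Real.log 2 : ℂ), (Real.pi : ℂ) * I / 2 - 2 * (Real.log 2 : ℂ)) : ℂ × ℂ)).2
        = ((2*z.1 + z.2) + 2 * (Real.log 2 : ℂ)) + (Real.pi : ℂ) * I / 2 from by
          simp [Prod.fst_add, Prod.snd_add]; ring,
      Complex.exp_add, Complex.exp_add, hL, hI]
    ring
  have hE : Complex.exp (3 * z.1 + 2 * z.2)
      = Complex.exp (z.1 + z.2) * Complex.exp (2*z.1 + z.2) := by
    rw [← Complex.exp_add]; ring_nf
  have hI2 : I ^ 2 = -1 := Complex.I_sq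
  rw [e1, e2, d2combo, d2combo, hf₁, hf₂, hA1, hA2, hE]
  constructor <;> ring_nf <;> rw [Complex.I_sq] <;> ring
end

section
/- (Example 5, instantiating Theorem 2(iii) with k = 1.) Let c = ((1/2)·log 2, 0) ∈ ℂ² (log 2 the real logarithm of 2). Define A(z) = 2z₁ + 3z₂ + z₂³, B(z) = 2z₁ − z₂ + z₂⁵, f₁(z) = −(1/(4i))(i·e^{A(z)} + e^{B(z)}) and f₂(z) = −(1/(4i))(e^{A(z)} + i·e^{B(z)}). Then for all z = (z₁, z₂) ∈ ℂ²: (∂f₁/∂z₁)(z)² + f₂(z + c)² = −i·exp(4z₁ + 2z₂ + z₂³ + z₂⁵) and (∂f₂/∂z₁)(z)² + f₁(z + c)² = −i·exp(4z₁ + 2z₂ + z₂³ + z₂⁵); that is, both equal e^{g(z)} with g(z) = 4z₁ + 2z₂ + z₂³ + z₂⁵ + 3πi/2. -/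
open Complex

/-- Example 5, instantiating Theorem 2(iii) with k = 1. -/
theorem stmt_18 (c : ℂ × ℂ) (hc : c = ((1 / 2) * (Real.log 2 : ℂ), 0))
    (A B f₁ f₂ : ℂ × ℂ → ℂ)
    (hA : ∀ z : ℂ × ℂ, A z = 2 * z.1 + 3 * z.2 + z.2 ^ 3)
    (hB : ∀ z : ℂ × ℂ, B z = 2 * z.1 - z.2 + z.2 ^ 5)
    (hf₁ : ∀ z : ℂ × ℂ, f₁ z = -((1 / (4 * I)) *
      (I * Complex.exp (A z) + Complex.exp (B z))))
    (hf₂ : ∀ z : ℂ × ℂ, f₂ z = -((1 / (4 * I)) *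
      (Complex.exp (A z) + I * Complex.exp (B z)))) :
    ∀ z : ℂ × ℂ,
      (deriv (fun t => f₁ (t, z.2)) z.1) ^ 2 + f₂ (z + c) ^ 2 =
        -I * Complex.exp (4 * z.1 + 2 * z.2 + z.2 ^ 3 + z.2 ^ 5) ∧
      (deriv (fun t => f₂ (t, z.2)) z.1) ^ 2 + f₁ (z + c) ^ 2 =
        -I * Complex.exp (4 * z.1 + 2 * z.2 + z.2 ^ 3 + z.2 ^ 5) := by
  intro z
  set a := Complex.exp (2 * z.1 + 3 * z.2 + z.2 ^ 3) with ha
  set b := Complex.exp (2 * z.1 - z.2 + z.2 ^ 5) with hb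
  have hexpA : ∀ t : ℂ, HasDerivAt (fun t : ℂ => Complex.exp (2 * t + 3 * z.2 + z.2 ^ 3))
      (2 * Complex.exp (2 * t + 3 * z.2 + z.2 ^ 3)) t := by
    intro t
    have h := (((hasDerivAt_id t).const_mul 2).add_const (3 * z.2 + z.2 ^ 3)).cexp
    simpa [mul_comm, add_assoc] using h
  have hexpB : ∀ t : ℂ, HasDerivAt (fun t : ℂ => Complex.exp (2 * t - z.2 + z.2 ^ 5))
      (2 * Complex.exp (2 * t - z.2 + z.2 ^ 5)) t := by
    intro t
    have h := (((hasDerivAt_id t).const_mul 2).add_const (-z.2 + z.2 ^ 5)).cexp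
    simpa [mul_comm, add_assoc, sub_eq_add_neg] using h
  have hd1 : deriv (fun t => f₁ (t, z.2)) z.1
      = -((1 / (4 * I)) * (I * (2 * a) + 2 * b)) := by
    have h : HasDerivAt (fun t => f₁ (t, z.2))
        (-((1 / (4 * I)) * (I * (2 * a) + 2 * b))) z.1 := by
      have h1 : (fun t => f₁ (t, z.2)) = fun t : ℂ =>
          -((1 / (4 * I)) * (I * Complex.exp (2 * t + 3 * z.2 + z.2 ^ 3)
            + Complex.exp (2 * t - z.2 + z.2 ^ 5))) := by
        funext t; rw [hf₁, hA, hB]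
      rw [h1]
      exact ((((hexpA z.1).const_mul I).add (hexpB z.1)).const_mul (1 / (4 * I))).neg
    exact h.deriv
  have hd2 : deriv (fun t => f₂ (t, z.2)) z.1
      = -((1 / (4 * I)) * ((2 * a) + I * (2 * b))) := by
    have h : HasDerivAt (fun t => f₂ (t, z.2))
        (-((1 / (4 * I)) * ((2 * a) + I * (2 * b)))) z.1 := by
      have h1 : (fun t => f₂ (t, z.2)) = fun t : ℂ =>
          -((1 / (4 * I)) * (Complex.exp (2 * t + 3 * z.2 + z.2 ^ 3)
            + I * Complex.exp (2 * t - z.2 + z.2 ^ 5))) := by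
        funext t; rw [hf₂, hA, hB]
      rw [h1]
      exact (((hexpA z.1).add ((hexpB z.1).const_mul I)).const_mul (1 / (4 * I))).neg
    exact h.deriv
  have h2 : Complex.exp ((Real.log 2 : ℂ)) = 2 := by
    rw [← Complex.ofReal_exp, Real.exp_log (by norm_num)]
    norm_num
  have hAc : Complex.exp (A (z + c)) = 2 * a := by
    rw [hA, hc]
    have : (2 : ℂ) * (z + ((1 / 2) * (Real.log 2 : ℂ), 0)).1
        + 3 * (z + ((1 / 2) * (Real.log 2 : ℂ), 0)).2
        + (z + ((1 / 2) * (Real.log 2 : ℂ), 0)).2 ^ 3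
        = (Real.log 2 : ℂ) + (2 * z.1 + 3 * z.2 + z.2 ^ 3) := by
      simp [Prod.fst_add, Prod.snd_add]; ring
    rw [this, Complex.exp_add, h2, ha]
  have hBc : Complex.exp (B (z + c)) = 2 * b := by
    rw [hB, hc]
    have : (2 : ℂ) * (z + ((1 / 2) * (Real.log 2 : ℂ), 0)).1
        - (z + ((1 / 2) * (Real.log 2 : ℂ), 0)).2
        + (z + ((1 / 2) * (Real.log 2 : ℂ), 0)).2 ^ 5
        = (Real.log 2 : ℂ) + (2 * z.1 - z.2 + z.2 ^ 5) := by
      simp [Prod.fst_add, Prod.snd_add]; ring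
    rw [this, Complex.exp_add, h2, hb]
  have hab : a * b = Complex.exp (4 * z.1 + 2 * z.2 + z.2 ^ 3 + z.2 ^ 5) := by
    rw [ha, hb, ← Complex.exp_add]; ring_nf
  have hI : I * I = -1 := Complex.I_mul_I
  constructor
  · rw [hd1, hf₂, hAc, hBc, ← hab]
    field_simp
    ring_nf
    rw [show (I:ℂ) ^ 3 = -I by rw [pow_succ, Complex.I_sq]; ring]
    ring_nf
    rw [Complex.I_sq]
    ring
  · rw [hd2, hf₁, hAc, hBc, ← hab]
    field_simp
    ring_nf
    rw [show (I:ℂ) ^ 3 = -I by rw [pow_succ, Complex.I_sq]; ring]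
    ring_nf
    rw [Complex.I_sq]
    ring
end

section
/- (Example 6, instantiating Theorem 3(i) with k = 1.) Let c = (c₁, 0) ∈ ℂ² with exp(2i·c₁) = −1 (e.g., 2i·c₁ = (2m+1)πi for an integer m). Define P(z₁, z₂) = 2i·z₁ − z₂ − z₂¹⁰ and f₁(z) = f₂(z) = (e^{P(z)} − e^{−P(z)})/(4i). Then for all z = (z₁, z₂) ∈ ℂ²: (∂f₁/∂z₁)(z)² + (f₂(z + c) − f₂(z))² = 1 and (∂f₂/∂z₁)(z)² + (f₁(z + c) − f₁(z))² = 1. -/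
open Complex

/-- Example 6, instantiating Theorem 3(i) with k = 1. -/
theorem stmt_19 (c₁ : ℂ) (hc₁ : Complex.exp (2 * I * c₁) = -1)
    (c : ℂ × ℂ) (hc : c = (c₁, 0))
    (P f₁ f₂ : ℂ × ℂ → ℂ)
    (hP : ∀ z : ℂ × ℂ, P z = 2 * I * z.1 - z.2 - z.2 ^ 10)
    (hf₁ : ∀ z : ℂ × ℂ, f₁ z = (Complex.exp (P z) - Complex.exp (-P z)) / (4 * I))
    (hf₂ : ∀ z : ℂ × ℂ, f₂ z = (Complex.exp (P z) - Complex.exp (-P z)) / (4 * I)) :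
    ∀ z : ℂ × ℂ,
      (deriv (fun t => f₁ (t, z.2)) z.1) ^ 2 + (f₂ (z + c) - f₂ z) ^ 2 = 1 ∧
      (deriv (fun t => f₂ (t, z.2)) z.1) ^ 2 + (f₁ (z + c) - f₁ z) ^ 2 = 1 := by
  intro z
  have hPz : P z = 2 * I * z.1 - z.2 - z.2 ^ 10 := hP z
  -- derivative computation
  have hQ : HasDerivAt (fun t : ℂ => 2 * I * t - z.2 - z.2 ^ 10) (2 * I) z.1 := by
    have h1 : HasDerivAt (fun t : ℂ => 2 * I * t) (2 * I) z.1 := by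
      simpa using (hasDerivAt_id z.1).const_mul (2 * I)
    simpa using (h1.sub_const z.2).sub_const (z.2 ^ 10)
  have hD : HasDerivAt (fun t : ℂ => (Complex.exp (2 * I * t - z.2 - z.2 ^ 10)
      - Complex.exp (-(2 * I * t - z.2 - z.2 ^ 10))) / (4 * I))
      ((Complex.exp (P z) * (2 * I) - Complex.exp (-P z) * (-(2 * I))) / (4 * I)) z.1 := by
    have hE1 : HasDerivAt (fun t : ℂ => Complex.exp (2 * I * t - z.2 - z.2 ^ 10))
        (Complex.exp (P z) * (2 * I)) z.1 := by
      rw [hPz]; exact hQ.cexp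
    have hE2 : HasDerivAt (fun t : ℂ => Complex.exp (-(2 * I * t - z.2 - z.2 ^ 10)))
        (Complex.exp (-P z) * (-(2 * I))) z.1 := by
      rw [hPz]; exact hQ.neg.cexp
    exact (hE1.sub hE2).div_const (4 * I)
  have hDval : deriv (fun t => f₁ (t, z.2)) z.1
      = (Complex.exp (P z) + Complex.exp (-P z)) / 2 := by
    have hfun : (fun t => f₁ (t, z.2)) = fun t : ℂ => (Complex.exp (2 * I * t - z.2 - z.2 ^ 10)
        - Complex.exp (-(2 * I * t - z.2 - z.2 ^ 10))) / (4 * I) := by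
      funext t
      rw [hf₁ (t, z.2), hP (t, z.2)]
    rw [hfun, hD.deriv]
    have : I ≠ 0 := I_ne_zero
    field_simp
    ring_nf
  -- shift computation
  have hPshift : P (z + c) = P z + 2 * I * c₁ := by
    rw [hP (z + c), hPz, hc]
    simp [Prod.fst_add, Prod.snd_add]
    ring
  have hexpneg : Complex.exp (-(2 * I * c₁)) = -1 := by
    rw [Complex.exp_neg, hc₁]
    norm_num
  have hshift : f₂ (z + c) - f₂ z = (Complex.exp (-P z) - Complex.exp (P z)) / (2 * I) := by
    rw [hf₂ (z + c), hf₂ z, hPshift]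
    rw [show -(P z + 2 * I * c₁) = -P z + -(2 * I * c₁) by ring]
    rw [Complex.exp_add, Complex.exp_add, hc₁, hexpneg]
    have : I ≠ 0 := I_ne_zero
    field_simp
    ring
  have hshift₁ : f₁ (z + c) - f₁ z = (Complex.exp (-P z) - Complex.exp (P z)) / (2 * I) := by
    rw [hf₁ (z + c), hf₁ z, ← hf₂ (z + c), ← hf₂ z]
    exact hshift
  have hDval₂ : deriv (fun t => f₂ (t, z.2)) z.1
      = (Complex.exp (P z) + Complex.exp (-P z)) / 2 := by
    have : (fun t => f₂ (t, z.2)) = (fun t => f₁ (t, z.2)) := by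
      funext t; rw [hf₁ (t, z.2), hf₂ (t, z.2)]
    rw [this]; exact hDval
  have key : ((Complex.exp (P z) + Complex.exp (-P z)) / 2) ^ 2
      + ((Complex.exp (-P z) - Complex.exp (P z)) / (2 * I)) ^ 2 = 1 := by
    have hmul : Complex.exp (P z) * Complex.exp (-P z) = 1 := by
      rw [← Complex.exp_add]; simp
    rw [Complex.exp_neg, div_pow, div_pow, mul_pow, Complex.I_sq]
    have hne : Complex.exp (P z) ≠ 0 := Complex.exp_ne_zero _
    field_simp
    ring
  constructor
  · rw [hDval, hshift]; exact key
  · rw [hDval₂, hshift₁]; exact key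
end
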